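/- arXiv:2511.18052 — 5 statements merged into one kernel-verified Lean document; each statement's English description precedes it below -/
import Mathlib

section
/- Let C > 0 and let (c_i)_{i≥N} be nonnegative reals. Let (X_i)_{i≥N} be a nonnegative adapted process with E[X_{i+1} | F_i] ≤ (1 + c_i) X_i, and suppose each increment satisfies X_{i+1} = X_i or X_i + 1 ≤ X_{i+1} ≤ X_i + C. Then for any M > X_N, P(∃ n ≥ N such that X_n ≥ M ∏_{i=N}^{n−1}(1+c_i) | F_{X_N}) ≤ exp(−(M − X_N)²/(8MC²)). -/
open MeasureTheory Finset

private lemma exp_le_one_add_add_sq {t : ℝ} (h0 : 0 ≤ t) (h1 : t ≤ 1) :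
    Real.exp t ≤ 1 + t + t ^ 2 := by
  have h := Real.exp_bound' h0 h1 (n := 2) (by norm_num)
  have hs : (∑ m ∈ Finset.range 2, t ^ m / m.factorial) = 1 + t := by
    simp [Finset.sum_range_succ]
  rw [hs] at h
  have h2 : (1:ℝ) + t + t ^ 2 * (↑2 + 1) / (↑(Nat.factorial 2) * ↑2) ≤ 1 + t + t ^ 2 := by
    norm_num [Nat.factorial]
    nlinarith [sq_nonneg t]
  linarith

private lemma exp_chord {a C x : ℝ} (hC : 0 < C) (hx0 : 0 ≤ x) (hxC : x ≤ C) :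
    Real.exp (a * x) ≤ 1 + x * ((Real.exp (a * C) - 1) / C) := by
  have ht0 : 0 ≤ x / C := div_nonneg hx0 hC.le
  have ht1 : 0 ≤ 1 - x / C := by
    have : x / C ≤ 1 := (div_le_one hC).2 hxC
    linarith
  have key := convexOn_exp.2 (Set.mem_univ (0:ℝ)) (Set.mem_univ (a * C)) ht1 ht0 (by ring)
  simp only [smul_eq_mul, mul_zero, Real.exp_zero, mul_one] at key
  have harg : 0 + x / C * (a * C) = a * x := by field_simp; ring
  rw [harg] at key
  calc Real.exp (a * x) ≤ (1 - x / C) + x / C * Real.exp (a * C) := key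
    _ = 1 + x * ((Real.exp (a * C) - 1) / C) := by field_simp; ring

private lemma integral_mul_condexp_le {Ω : Type*} {m0 : MeasurableSpace Ω} {μ : Measure Ω}
    [IsProbabilityMeasure μ] {m : MeasurableSpace Ω} (hm : m ≤ m0) {h f g : Ω → ℝ}
    (hh : StronglyMeasurable[m] h) {B : ℝ} (hhb : ∀ ω, |h ω| ≤ B)
    (hh0 : ∀ ω, 0 ≤ h ω) (hf : Integrable f μ) (hg : Integrable g μ)
    (hle : μ[f|m] ≤ᵐ[μ] g) :
    ∫ ω, h ω * f ω ∂μ ≤ ∫ ω, h ω * g ω ∂μ := by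
  have hhm0 : AEStronglyMeasurable[m0] h μ := (hh.mono hm).aestronglyMeasurable
  have hhf : Integrable (fun ω => h ω * f ω) μ := hf.bdd_mul hhm0 (c := B) (ae_of_all _ fun ω => by rw [Real.norm_eq_abs]; exact hhb ω)
  have hhg : Integrable (fun ω => h ω * g ω) μ := hg.bdd_mul hhm0 (c := B) (ae_of_all _ fun ω => by rw [Real.norm_eq_abs]; exact hhb ω)
  have hhc : Integrable (fun ω => h ω * (μ[f|m]) ω) μ :=
    (integrable_condExp).bdd_mul hhm0 (c := B) (ae_of_all _ fun ω => by rw [Real.norm_eq_abs]; exact hhb ω)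
  have h1 : ∫ ω, h ω * f ω ∂μ = ∫ ω, h ω * (μ[f|m]) ω ∂μ := by
    have hmul : μ[h * f|m] =ᵐ[μ] h * μ[f|m] :=
      condExp_mul_of_stronglyMeasurable_left hh (by exact hhf) hf
    calc ∫ ω, h ω * f ω ∂μ = ∫ ω, (μ[h * f|m]) ω ∂μ := (integral_condExp hm).symm
      _ = ∫ ω, h ω * (μ[f|m]) ω ∂μ := integral_congr_ae hmul
  rw [h1]
  exact integral_mono_ae hhc hhg (hle.mono fun ω hω => mul_le_mul_of_nonneg_left hω (hh0 ω))

open Classical in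
noncomputable def stopProc {Ω : Type*} (S : ℕ → Set Ω) (Φ : ℕ → Ω → ℝ) (y : ℝ) : ℕ → Ω → ℝ
  | 0 => fun _ => y
  | (k+1) => (S k).piecewise (stopProc S Φ y k) (Φ (k+1))

set_option maxHeartbeats 1000000 in
/-- Lemma 5.1 (me3): exponential maximal upper bound for a process with
multiplicative conditional drift and bounded jumps, started at the constant `x₀`. -/
theorem maximal_upper_bound_me3
    {Ω : Type*} {m0 : MeasurableSpace Ω} (μ : Measure Ω) [IsProbabilityMeasure μ]
    (ℱ : Filtration ℕ m0) (X : ℕ → Ω → ℝ) (N : ℕ)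
    (C : ℝ) (hC : 0 < C) (c : ℕ → ℝ) (hc : ∀ i, 0 ≤ c i)
    (hadapt : Adapted ℱ X) (hint : ∀ i, Integrable (X i) μ)
    (hpos : ∀ i, 0 ≤ᵐ[μ] X i)
    (hrec : ∀ i, N ≤ i → μ[X (i + 1) | ℱ i] ≤ᵐ[μ] fun ω => (1 + c i) * X i ω)
    (hinc : ∀ i ω, N ≤ i →
      X (i + 1) ω = X i ω ∨ (X i ω + 1 ≤ X (i + 1) ω ∧ X (i + 1) ω ≤ X i ω + C))
    (x₀ M : ℝ) (hstart : ∀ ω, X N ω = x₀) (hM : x₀ < M) :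
    μ {ω | ∃ n, N ≤ n ∧ M * ∏ i ∈ Finset.Ico N n, (1 + c i) ≤ X n ω}
      ≤ ENNReal.ofReal (Real.exp (-(M - x₀) ^ 2 / (8 * M * C ^ 2))) := by
  classical
  set P : ℕ → ℝ := fun n => ∏ i ∈ Finset.Ico N n, (1 + c i) with hPdef
  have hP1 : ∀ n, 1 ≤ P n := by
    intro n
    simp only [hPdef]
    calc (1:ℝ) = ∏ _i ∈ Finset.Ico N n, (1:ℝ) := by simp
      _ ≤ ∏ i ∈ Finset.Ico N n, (1 + c i) :=
        Finset.prod_le_prod (fun i _ => zero_le_one) (fun i _ => by linarith [hc i])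
  have hPpos : ∀ n, 0 < P n := fun n => lt_of_lt_of_le one_pos (hP1 n)
  have hPsucc : ∀ n, N ≤ n → P (n + 1) = P n * (1 + c n) := fun n hn => by
    simp only [hPdef]; exact Finset.prod_Ico_succ_top hn _
  have hPle : ∀ n, N ≤ n → P n ≤ P (n + 1) := by
    intro n hn
    rw [hPsucc n hn]
    nlinarith [hc n, hPpos n]
  have hPN : P N = 1 := by simp [hPdef]
  have hae : (MeasureTheory.ae μ).NeBot := ae_neBot.mpr (IsProbabilityMeasure.ne_zero μ)
  have hx₀ : 0 ≤ x₀ := by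
    obtain ⟨ω, hω⟩ := (hpos N).exists
    rwa [hstart ω] at hω
  have hM0 : 0 < M := lt_of_le_of_lt hx₀ hM
  by_cases hC1 : C < 1
  · -- degenerate case: all increments are zero
    have hconst : ∀ ω n, N ≤ n → X n ω = x₀ := by
      intro ω n hn
      induction n, hn using Nat.le_induction with
      | base => exact hstart ω
      | succ n hn ih =>
        rcases hinc n ω hn with h | ⟨h1, h2⟩
        · rw [h, ih]
        · linarith
    have hempty : {ω | ∃ n, N ≤ n ∧ M * ∏ i ∈ Finset.Ico N n, (1 + c i) ≤ X n ω} = ∅ := by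
      ext ω
      simp only [Set.mem_setOf_eq, Set.mem_empty_iff_false, iff_false, not_exists]
      rintro n ⟨hn, hle⟩
      rw [hconst ω n hn] at hle
      have h1 : M * 1 ≤ M * P n := mul_le_mul_of_nonneg_left (hP1 n) hM0.le
      simp only [hPdef] at h1
      linarith
    rw [hempty]
    simp
  push_neg at hC1
  -- main case : 1 ≤ C
  set L : ℝ := (M - x₀) / (2 * C * M) with hLdef
  set K : ℝ := L ^ 2 * C * M with hKdef
  have hL0 : 0 < L := div_pos (by linarith) (by positivity)
  have hLC : L * C ≤ 1 := by
    have hLCeq : L * C = (M - x₀) / (2 * M) := by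
      rw [hLdef]; field_simp
    rw [hLCeq, div_le_one (by positivity)]; linarith
  have hK0 : 0 ≤ K := by positivity
  set Φ : ℕ → Ω → ℝ := fun n ω => Real.exp (L * X n ω / P n - K * (1 - 1 / P n)) with hΦdef
  set S : ℕ → Set Ω := fun n => ⋃ k ∈ Finset.Icc N n, {ω | M * P k ≤ X k ω} with hSdef
  set D : ℕ → Ω → ℝ :=
    stopProc (fun k => S (N + k)) (fun k => Φ (N + k)) (Real.exp (L * x₀)) with hDdef
  have hSmem : ∀ n ω, ω ∈ S n ↔ ∃ k, N ≤ k ∧ k ≤ n ∧ M * P k ≤ X k ω := by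
    intro n ω
    simp only [hSdef, Set.mem_iUnion, Finset.mem_Icc, Set.mem_setOf_eq]
    constructor
    · rintro ⟨k, ⟨h1, h2⟩, h3⟩; exact ⟨k, h1, h2, h3⟩
    · rintro ⟨k, h1, h2, h3⟩; exact ⟨k, ⟨h1, h2⟩, h3⟩
  have hSmono : ∀ m n, m ≤ n → S m ⊆ S n := by
    intro m n hmn ω hω
    obtain ⟨k, h1, h2, h3⟩ := (hSmem m ω).1 hω
    exact (hSmem n ω).2 ⟨k, h1, h2.trans hmn, h3⟩
  have hSF : ∀ n, MeasurableSet[ℱ n] (S n) := by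
    intro n
    rw [hSdef]
    apply MeasurableSet.biUnion (Finset.Icc N n).countable_toSet
    intro k hk
    have hk' : k ≤ n := (Finset.mem_Icc.mp hk).2
    exact ℱ.mono hk' _ (measurableSet_le measurable_const (hadapt k))
  have hSm0 : ∀ n, MeasurableSet (S n) := fun n => ℱ.le n _ (hSF n)
  have hXm : ∀ n, Measurable (X n) := fun n => (hadapt n).mono (ℱ.le n) le_rfl
  have hΦm : ∀ n, Measurable (Φ n) := by
    intro n
    rw [hΦdef]
    exact Real.measurable_exp.comp
      ((((hXm n).const_mul L).div_const (P n)).sub measurable_const)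
  have hD0eq : ∀ ω, D 0 ω = Real.exp (L * x₀) := fun ω => by rw [hDdef]; rfl
  have hDstep : ∀ k, D (k+1) = (S (N+k)).piecewise (D k) (Φ (N+k+1)) := fun k => by
    rw [hDdef]; rfl
  have hD0 : ∀ k ω, 0 ≤ D k ω := by
    intro k
    induction k with
    | zero => intro ω; rw [hD0eq]; exact (Real.exp_pos _).le
    | succ k ih =>
      intro ω
      rw [hDstep k]
      by_cases h : ω ∈ S (N+k)
      · rw [Set.piecewise_eq_of_mem _ _ _ h]; exact ih ω
      · rw [Set.piecewise_eq_of_notMem _ _ _ h]; exact (Real.exp_pos _).le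
  have hDm : ∀ k, Measurable (D k) := by
    intro k
    induction k with
    | zero => simp only [hDdef, stopProc]; exact measurable_const
    | succ k ih =>
      rw [hDstep k]
      exact Measurable.piecewise (hSm0 _) ih (hΦm _)
  have hDΦ : ∀ k ω, ω ∉ S (N + k) → D k ω = Φ (N + k) ω := by
    intro k ω hω
    cases k with
    | zero =>
      rw [hD0eq]
      simp only [hΦdef, Nat.add_zero, hstart ω, hPN]
      norm_num
    | succ k =>
      have hω' : ω ∉ S (N + k) := fun h => hω (hSmono _ _ (by omega) h)
      rw [hDstep k, Set.piecewise_eq_of_notMem _ _ _ hω']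
      rfl
  have hnotS : ∀ n ω, N ≤ n → ω ∉ S n → X n ω < M * P n := by
    intro n ω hn hω
    by_contra hcon
    exact hω ((hSmem n ω).2 ⟨n, hn, le_refl n, not_lt.1 hcon⟩)
  have hXsucc : ∀ n ω, N ≤ n → X n ω ≤ X (n+1) ω ∧ X (n+1) ω ≤ X n ω + C := by
    intro n ω hn
    rcases hinc n ω hn with h | ⟨h1, h2⟩
    · constructor <;> [exact h.ge; linarith]
    · constructor <;> linarith
  have hDhit : ∀ k ω, ω ∈ S (N + k) → Real.exp (L * M - K) ≤ D k ω := by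
    intro k
    induction k with
    | zero =>
      intro ω hω
      exfalso
      obtain ⟨j, hj1, hj2, hj3⟩ := (hSmem _ ω).1 hω
      have hjN : j = N := by omega
      subst hjN
      rw [hstart ω, hPN] at hj3
      linarith
    | succ k ih =>
      intro ω hω
      rw [hDstep k]
      by_cases h : ω ∈ S (N+k)
      · rw [Set.piecewise_eq_of_mem _ _ _ h]; exact ih ω h
      · rw [Set.piecewise_eq_of_notMem _ _ _ h]
        obtain ⟨j, hj1, hj2, hj3⟩ := (hSmem _ ω).1 hω
        have hj : j = N + k + 1 := by
          by_contra hne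
          exact h ((hSmem _ ω).2 ⟨j, hj1, by omega, hj3⟩)
        subst hj
        simp only [hΦdef]
        apply Real.exp_le_exp.2
        have hp := hPpos (N + k + 1)
        have h1 : L * M ≤ L * X (N+k+1) ω / P (N+k+1) := by
          rw [le_div_iff₀ hp]
          calc L * M * P (N+k+1) = L * (M * P (N+k+1)) := by ring
            _ ≤ L * X (N+k+1) ω := mul_le_mul_of_nonneg_left hj3 hL0.le
        have h2 : K * (1 - 1 / P (N+k+1)) ≤ K := by
          have h3 : 0 ≤ 1 / P (N+k+1) := by positivity
          nlinarith
        linarith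
  have hDbd : ∀ k ω, D k ω ≤ Real.exp (L * (M + C)) := by
    intro k
    induction k with
    | zero =>
      intro ω
      rw [hD0eq]
      apply Real.exp_le_exp.2
      apply mul_le_mul_of_nonneg_left (by linarith) hL0.le
    | succ k ih =>
      intro ω
      rw [hDstep k]
      by_cases h : ω ∈ S (N+k)
      · rw [Set.piecewise_eq_of_mem _ _ _ h]; exact ih ω
      · rw [Set.piecewise_eq_of_notMem _ _ _ h]
        have hXk := hnotS (N+k) ω (by omega) h
        have hXk1 := (hXsucc (N+k) ω (by omega)).2
        have hp1 := hP1 (N+k+1)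
        have hpp := hPpos (N+k+1)
        have hple := hPle (N+k) (by omega)
        have hX1 : X (N+k+1) ω ≤ (M + C) * P (N+k+1) := by
          have e1 : M * P (N+k) ≤ M * P (N+k+1) := mul_le_mul_of_nonneg_left hple hM0.le
          have e2 : C * 1 ≤ C * P (N+k+1) := mul_le_mul_of_nonneg_left hp1 hC.le
          nlinarith
        simp only [hΦdef]
        apply Real.exp_le_exp.2
        have h1 : L * X (N+k+1) ω / P (N+k+1) ≤ L * (M + C) := by
          rw [div_le_iff₀ hpp]
          calc L * X (N+k+1) ω ≤ L * ((M + C) * P (N+k+1)) :=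
                mul_le_mul_of_nonneg_left hX1 hL0.le
            _ = L * (M + C) * P (N+k+1) := by ring
        have h2 : 0 ≤ K * (1 - 1 / P (N+k+1)) := by
          apply mul_nonneg hK0
          have : 1 / P (N+k+1) ≤ 1 := by rw [div_le_one hpp]; exact hp1
          linarith
        linarith
  have hDint : ∀ k, Integrable (D k) μ := by
    intro k
    apply Integrable.mono' (integrable_const (Real.exp (L * (M + C))))
      ((hDm k).aestronglyMeasurable)
    exact ae_of_all _ fun ω => by
      rw [Real.norm_eq_abs, abs_of_nonneg (hD0 k ω)]; exact hDbd k ω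
  -- the one-step supermartingale estimate
  have hstep : ∀ k, ∫ ω, D (k+1) ω ∂μ ≤ ∫ ω, D k ω ∂μ := by
    intro k
    have hnN : N ≤ N + k := by omega
    set T : Set Ω := (S (N + k))ᶜ with hTdef
    have hTm : MeasurableSet T := (hSm0 _).compl
    set a : ℝ := L / P (N + k + 1) with hadef
    have hp := hPpos (N + k + 1)
    have hpn := hPpos (N + k)
    have hple := hPle (N + k) hnN
    have ha0 : 0 < a := div_pos hL0 hp
    have haL : a ≤ L := by
      rw [hadef]; exact div_le_self hL0.le (hP1 _)
    have haC1 : a * C ≤ 1 :=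
      le_trans (mul_le_mul_of_nonneg_right haL hC.le) hLC
    set β : ℝ := (Real.exp (a * C) - 1) / C with hβdef
    have hβ0 : 0 ≤ β := by
      apply div_nonneg _ hC.le
      have : (1:ℝ) = Real.exp 0 := Real.exp_zero.symm
      rw [this]
      have := Real.exp_le_exp.2 (mul_nonneg ha0.le hC.le : (0:ℝ) ≤ a * C)
      linarith [this]
    have hβa : β ≤ a + a^2 * C := by
      have hexp := exp_le_one_add_add_sq (mul_nonneg ha0.le hC.le) haC1
      rw [hβdef, div_le_iff₀ hC]
      nlinarith
    set g : Ω → ℝ := fun ω => Real.exp (a * X (N+k) ω - K * (1 - 1 / P (N+k+1))) with hgdef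
    set F : Ω → ℝ := T.indicator g with hFdef
    have hXltT : ∀ ω ∈ T, X (N+k) ω < M * P (N+k) := fun ω hω => hnotS _ ω hnN hω
    have hgm : Measurable[ℱ (N+k)] g := by
      rw [hgdef]
      exact Real.measurable_exp.comp
        (((show Measurable[ℱ (N+k)] (X (N+k)) from hadapt (N+k)).const_mul a).sub measurable_const)
    have hFSM : StronglyMeasurable[ℱ (N+k)] F := by
      rw [hFdef]
      exact (hgm.indicator (hSF (N+k)).compl).stronglyMeasurable
    have hFm0 : AEStronglyMeasurable F μ := ((hFSM.mono (ℱ.le _))).aestronglyMeasurable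
    have hF0 : ∀ ω, 0 ≤ F ω := by
      intro ω
      rw [hFdef]
      exact Set.indicator_nonneg (fun ω _ => (Real.exp_pos _).le) ω
    have hFbd : ∀ ω, |F ω| ≤ Real.exp (L * M) := by
      intro ω
      rw [abs_of_nonneg (hF0 ω), hFdef]
      by_cases hω : ω ∈ T
      · rw [Set.indicator_of_mem hω]
        rw [hgdef]
        apply Real.exp_le_exp.2
        have h1 : a * X (N+k) ω ≤ L * M := by
          have e1 : a * X (N+k) ω ≤ a * (M * P (N+k)) :=
            mul_le_mul_of_nonneg_left (hXltT ω hω).le ha0.le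
          have e2 : a * (M * P (N+k)) ≤ a * (M * P (N+k+1)) := by
            apply mul_le_mul_of_nonneg_left _ ha0.le
            exact mul_le_mul_of_nonneg_left hple hM0.le
          have e3 : a * (M * P (N+k+1)) = L * M * (P (N+k+1) / P (N+k+1)) := by
            rw [hadef]; ring
          rw [div_self hp.ne', mul_one] at e3
          linarith
        have h2 : 0 ≤ K * (1 - 1 / P (N+k+1)) := by
          apply mul_nonneg hK0
          have : 1 / P (N+k+1) ≤ 1 := by rw [div_le_one hp]; exact hP1 _
          linarith
        linarith
      · rw [Set.indicator_of_notMem hω]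
        exact (Real.exp_pos _).le
    have hΔ : ∀ ω, 0 ≤ X (N+k+1) ω - X (N+k) ω ∧ X (N+k+1) ω - X (N+k) ω ≤ C := by
      intro ω
      obtain ⟨h1, h2⟩ := hXsucc (N+k) ω hnN
      exact ⟨by linarith, by linarith⟩
    -- pointwise bound on the indicator of Φ (N+k+1)
    have key1 : ∀ ω, T.indicator (Φ (N+k+1)) ω ≤
        F ω + β * (F ω * X (N+k+1) ω) - β * (F ω * X (N+k) ω) := by
      intro ω
      by_cases hω : ω ∈ T
      · rw [Set.indicator_of_mem hω, hFdef, Set.indicator_of_mem hω]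
        have hsplit : Φ (N+k+1) ω = g ω * Real.exp (a * (X (N+k+1) ω - X (N+k) ω)) := by
          simp only [hΦdef, hgdef]
          rw [← Real.exp_add]
          congr 1
          rw [hadef]
          field_simp
          ring
        rw [hsplit]
        have hch := exp_chord (a := a) hC (hΔ ω).1 (hΔ ω).2
        calc g ω * Real.exp (a * (X (N+k+1) ω - X (N+k) ω))
            ≤ g ω * (1 + (X (N+k+1) ω - X (N+k) ω) * β) := by
              apply mul_le_mul_of_nonneg_left _ (Real.exp_pos _).le
              rw [hβdef]; exact hch
          _ = g ω + β * (g ω * X (N+k+1) ω) - β * (g ω * X (N+k) ω) := by ring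
      · rw [Set.indicator_of_notMem hω, hFdef, Set.indicator_of_notMem hω]
        simp
    -- integrabilities
    have hFint : Integrable F μ := by
      apply Integrable.mono' (integrable_const (Real.exp (L * M))) hFm0
      exact ae_of_all _ fun ω => by rw [Real.norm_eq_abs]; exact hFbd ω
    have hFX0 : Integrable (fun ω => F ω * X (N+k) ω) μ :=
      (hint (N+k)).bdd_mul hFm0 (c := Real.exp (L * M)) (ae_of_all _ fun ω => by rw [Real.norm_eq_abs]; exact hFbd ω)
    have hFX1 : Integrable (fun ω => F ω * X (N+k+1) ω) μ :=
      (hint (N+k+1)).bdd_mul hFm0 (c := Real.exp (L * M)) (ae_of_all _ fun ω => by rw [Real.norm_eq_abs]; exact hFbd ω)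
    have hRHSint : Integrable
        (fun ω => F ω + β * (F ω * X (N+k+1) ω) - β * (F ω * X (N+k) ω)) μ :=
      (hFint.add (hFX1.const_mul β)).sub (hFX0.const_mul β)
    have hindΦ1 : Integrable (T.indicator (Φ (N+k+1))) μ := by
      apply Integrable.mono'
        (integrable_const (Real.exp (L * M) * (1 + β * C)))
        ((hΦm (N+k+1)).indicator hTm).aestronglyMeasurable
      apply ae_of_all _ fun ω => ?_
      rw [Real.norm_eq_abs, abs_of_nonneg (Set.indicator_nonneg
        (fun ω _ => by rw [hΦdef]; exact (Real.exp_pos _).le) ω)]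
      have h1 := key1 ω
      have h2 := hΔ ω
      have h3 := hFbd ω
      rw [abs_of_nonneg (hF0 ω)] at h3
      have h4 : F ω + β * (F ω * X (N+k+1) ω) - β * (F ω * X (N+k) ω)
          = F ω * (1 + β * (X (N+k+1) ω - X (N+k) ω)) := by ring
      rw [h4] at h1
      have h5 : F ω * (1 + β * (X (N+k+1) ω - X (N+k) ω)) ≤
          Real.exp (L * M) * (1 + β * C) := by
        apply mul_le_mul h3 _ _ (Real.exp_pos _).le
        · have := mul_le_mul_of_nonneg_left h2.2 hβ0
          linarith
        · have := mul_nonneg hβ0 h2.1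
          linarith
      linarith
    have hindΦ0 : Integrable (T.indicator (Φ (N+k))) μ := by
      apply Integrable.mono' (integrable_const (Real.exp (L * M)))
        ((hΦm (N+k)).indicator hTm).aestronglyMeasurable
      apply ae_of_all _ fun ω => ?_
      rw [Real.norm_eq_abs, abs_of_nonneg (Set.indicator_nonneg
        (fun ω _ => by rw [hΦdef]; exact (Real.exp_pos _).le) ω)]
      by_cases hω : ω ∈ T
      · rw [Set.indicator_of_mem hω, hΦdef]
        apply Real.exp_le_exp.2
        have h1 : L * X (N+k) ω / P (N+k) ≤ L * M := by
          rw [div_le_iff₀ hpn]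
          calc L * X (N+k) ω ≤ L * (M * P (N+k)) :=
            mul_le_mul_of_nonneg_left (hXltT ω hω).le hL0.le
            _ = L * M * P (N+k) := by ring
        have h2 : 0 ≤ K * (1 - 1 / P (N+k)) := by
          apply mul_nonneg hK0
          have : 1 / P (N+k) ≤ 1 := by rw [div_le_one hpn]; exact hP1 _
          linarith
        linarith
      · rw [Set.indicator_of_notMem hω]; exact (Real.exp_pos _).le
    -- conditional drift step
    have hcond : ∫ ω, F ω * X (N+k+1) ω ∂μ ≤ ∫ ω, F ω * ((1 + c (N+k)) * X (N+k) ω) ∂μ :=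
      integral_mul_condexp_le (ℱ.le (N+k)) hFSM hFbd hF0 (hint (N+k+1))
        ((hint (N+k)).const_mul (1 + c (N+k))) (hrec (N+k) hnN)
    have hcond' : ∫ ω, F ω * ((1 + c (N+k)) * X (N+k) ω) ∂μ
        = (1 + c (N+k)) * ∫ ω, F ω * X (N+k) ω ∂μ := by
      have hfun : (fun ω => F ω * ((1 + c (N+k)) * X (N+k) ω))
          = fun ω => (1 + c (N+k)) * (F ω * X (N+k) ω) := by funext ω; ring
      rw [hfun, integral_const_mul]
    -- second pointwise bound (a.e., uses nonnegativity of X)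
    have key2 : ∀ᵐ ω ∂μ, F ω + (β * c (N+k)) * (F ω * X (N+k) ω)
        ≤ T.indicator (Φ (N+k)) ω := by
      filter_upwards [hpos (N+k)] with ω hX0
      by_cases hω : ω ∈ T
      · rw [Set.indicator_of_mem hω, hFdef, Set.indicator_of_mem hω]
        have hXle : X (N+k) ω ≤ M * P (N+k) := (hXltT ω hω).le
        have hnum : β * (c (N+k) * X (N+k) ω)
            ≤ (L * X (N+k) ω + K) * (c (N+k) / P (N+k+1)) := by
          have hXP1 : X (N+k) ω ≤ M * P (N+k+1) :=
            le_trans hXle (mul_le_mul_of_nonneg_left hple hM0.le)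
          have hu : X (N+k) ω / P (N+k+1) ≤ M := (div_le_iff₀ hp).2 hXP1
          have h2 : a^2 * C * X (N+k) ω ≤ K / P (N+k+1) := by
            have e1 : a^2 * C * X (N+k) ω
                = (L^2 * C / P (N+k+1)) * (X (N+k) ω / P (N+k+1)) := by
              rw [hadef]; field_simp
            rw [e1]
            calc (L^2 * C / P (N+k+1)) * (X (N+k) ω / P (N+k+1))
                ≤ (L^2 * C / P (N+k+1)) * M :=
                  mul_le_mul_of_nonneg_left hu (by positivity)
              _ = K / P (N+k+1) := by rw [hKdef]; ring
          have h1 : β * X (N+k) ω ≤ (L * X (N+k) ω + K) / P (N+k+1) := by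
            have haX : a * X (N+k) ω = L * X (N+k) ω / P (N+k+1) := by
              rw [hadef]; ring
            calc β * X (N+k) ω ≤ (a + a^2*C) * X (N+k) ω :=
                  mul_le_mul_of_nonneg_right hβa hX0
              _ = a * X (N+k) ω + a^2 * C * X (N+k) ω := by ring
              _ ≤ L * X (N+k) ω / P (N+k+1) + K / P (N+k+1) := by
                  rw [haX] at *; linarith
              _ = (L * X (N+k) ω + K) / P (N+k+1) := by ring
          calc β * (c (N+k) * X (N+k) ω) = (β * X (N+k) ω) * c (N+k) := by ring
            _ ≤ ((L * X (N+k) ω + K) / P (N+k+1)) * c (N+k) :=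
                mul_le_mul_of_nonneg_right h1 (hc _)
            _ = (L * X (N+k) ω + K) * (c (N+k) / P (N+k+1)) := by ring
        have hfact : 1 + (β * c (N+k)) * X (N+k) ω
            ≤ Real.exp ((L * X (N+k) ω + K) * (c (N+k) / P (N+k+1))) := by
          have := Real.add_one_le_exp ((L * X (N+k) ω + K) * (c (N+k) / P (N+k+1)))
          nlinarith
        have hΦg : Φ (N+k) ω = g ω *
            Real.exp ((L * X (N+k) ω + K) * (c (N+k) / P (N+k+1))) := by
          simp only [hΦdef, hgdef]
          rw [← Real.exp_add]
          congr 1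
          have hPs : P (N+k+1) = P (N+k) * (1 + c (N+k)) := hPsucc (N+k) hnN
          have hc0 : (0:ℝ) < 1 + c (N+k) := by linarith [hc (N+k)]
          rw [hadef, hPs]
          field_simp
          ring
        rw [hΦg]
        calc g ω + (β * c (N+k)) * (g ω * X (N+k) ω)
            = g ω * (1 + (β * c (N+k)) * X (N+k) ω) := by ring
          _ ≤ g ω * Real.exp ((L * X (N+k) ω + K) * (c (N+k) / P (N+k+1))) :=
              mul_le_mul_of_nonneg_left hfact (Real.exp_pos _).le
      · rw [Set.indicator_of_notMem hω, hFdef, Set.indicator_of_notMem hω]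
        simp
    -- assemble the integral chain over T
    have core : ∫ ω, T.indicator (Φ (N+k+1)) ω ∂μ ≤ ∫ ω, T.indicator (Φ (N+k)) ω ∂μ := by
      calc ∫ ω, T.indicator (Φ (N+k+1)) ω ∂μ
          ≤ ∫ ω, (F ω + β * (F ω * X (N+k+1) ω) - β * (F ω * X (N+k) ω)) ∂μ :=
            integral_mono hindΦ1 hRHSint key1
        _ = ∫ ω, F ω ∂μ + β * ∫ ω, F ω * X (N+k+1) ω ∂μ
              - β * ∫ ω, F ω * X (N+k) ω ∂μ := by
            have hI1 : Integrable (fun ω => F ω + β * (F ω * X (N+k+1) ω)) μ :=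
              hFint.add (hFX1.const_mul β)
            rw [integral_sub hI1 (hFX0.const_mul β),
              integral_add hFint (hFX1.const_mul β), integral_const_mul,
              integral_const_mul]
        _ ≤ ∫ ω, F ω ∂μ + β * ((1 + c (N+k)) * ∫ ω, F ω * X (N+k) ω ∂μ)
              - β * ∫ ω, F ω * X (N+k) ω ∂μ := by
            have := mul_le_mul_of_nonneg_left (hcond.trans_eq hcond') hβ0
            linarith
        _ = ∫ ω, (F ω + (β * c (N+k)) * (F ω * X (N+k) ω)) ∂μ := by
            rw [integral_add hFint (hFX0.const_mul (β * c (N+k))), integral_const_mul]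
            ring
        _ ≤ ∫ ω, T.indicator (Φ (N+k)) ω ∂μ :=
            integral_mono_ae (hFint.add (hFX0.const_mul _)) hindΦ0 key2
    -- combine with the piecewise decomposition
    calc ∫ ω, D (k+1) ω ∂μ
        = ∫ ω in S (N+k), D k ω ∂μ + ∫ ω in (S (N+k))ᶜ, Φ (N+k+1) ω ∂μ := by
          rw [hDstep k]
          exact integral_piecewise (hSm0 _) ((hDint k).integrableOn)
            ((integrable_indicator_iff hTm).1 hindΦ1)
      _ ≤ ∫ ω in S (N+k), D k ω ∂μ + ∫ ω in (S (N+k))ᶜ, Φ (N+k) ω ∂μ := by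
          apply add_le_add le_rfl
          rw [← integral_indicator hTm, ← integral_indicator hTm]
          exact core
      _ = ∫ ω in S (N+k), D k ω ∂μ + ∫ ω in (S (N+k))ᶜ, D k ω ∂μ := by
          congr 1
          apply setIntegral_congr_fun hTm
          intro ω hω
          exact (hDΦ k ω hω).symm
      _ = ∫ ω, D k ω ∂μ := integral_add_compl (hSm0 _) (hDint k)
  -- integral of D k is bounded by its starting value
  have hDled : ∀ k, ∫ ω, D k ω ∂μ ≤ Real.exp (L * x₀) := by
    intro k
    induction k with
    | zero =>
      have : ∫ ω, D 0 ω ∂μ = Real.exp (L * x₀) := by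
        have he : (fun ω => D 0 ω) = fun _ : Ω => Real.exp (L * x₀) := funext hD0eq
        rw [he, integral_const]
        simp
      rw [this]
    | succ k ih => exact (hstep k).trans ih
  -- Markov inequality on the hitting sets
  have hmark : ∀ k, μ (S (N + k)) ≤ ENNReal.ofReal (Real.exp (L * x₀ - (L * M - K))) := by
    intro k
    have hr : (0:ℝ) < Real.exp (L * M - K) := Real.exp_pos _
    have h1 : Real.exp (L * M - K) * (μ (S (N + k))).toReal ≤ ∫ ω, D k ω ∂μ := by
      calc Real.exp (L * M - K) * (μ (S (N + k))).toReal
          = ∫ _ω in S (N + k), Real.exp (L * M - K) ∂μ := by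
            rw [setIntegral_const, smul_eq_mul, measureReal_def]; ring
        _ ≤ ∫ ω in S (N + k), D k ω ∂μ :=
            setIntegral_mono_on (integrableOn_const (measure_ne_top μ _))
              ((hDint k).integrableOn) (hSm0 _) (fun ω hω => hDhit k ω hω)
        _ ≤ ∫ ω, D k ω ∂μ := setIntegral_le_integral (hDint k) (ae_of_all _ (hD0 k))
    have h2 : (μ (S (N + k))).toReal ≤ Real.exp (L * x₀) / Real.exp (L * M - K) := by
      rw [le_div_iff₀ hr]
      calc (μ (S (N + k))).toReal * Real.exp (L * M - K)
          = Real.exp (L * M - K) * (μ (S (N + k))).toReal := mul_comm _ _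
        _ ≤ ∫ ω, D k ω ∂μ := h1
        _ ≤ Real.exp (L * x₀) := hDled k
    calc μ (S (N + k)) = ENNReal.ofReal ((μ (S (N + k))).toReal) :=
          (ENNReal.ofReal_toReal (measure_ne_top μ _)).symm
      _ ≤ ENNReal.ofReal (Real.exp (L * x₀) / Real.exp (L * M - K)) :=
          ENNReal.ofReal_le_ofReal h2
      _ = ENNReal.ofReal (Real.exp (L * x₀ - (L * M - K))) := by
          have he : Real.exp (L * x₀ - (L * M - K))
              = Real.exp (L * x₀) / Real.exp (L * M - K) := Real.exp_sub _ _
          rw [he]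
  -- identify the event with the union of the hitting sets
  have hev : {ω | ∃ n, N ≤ n ∧ M * ∏ i ∈ Finset.Ico N n, (1 + c i) ≤ X n ω}
      = ⋃ k, S (N + k) := by
    ext ω
    simp only [Set.mem_setOf_eq, Set.mem_iUnion]
    constructor
    · rintro ⟨n, hn, hx⟩
      refine ⟨n - N, (hSmem _ ω).2 ⟨n, hn, by omega, ?_⟩⟩
      simpa [hPdef] using hx
    · rintro ⟨k, hk⟩
      obtain ⟨j, hj1, _, hj3⟩ := (hSmem _ ω).1 hk
      exact ⟨j, hj1, by simpa [hPdef] using hj3⟩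
  rw [hev]
  have hmono : Monotone (fun k => S (N + k)) := fun i j hij => hSmono _ _ (by omega)
  rw [Directed.measure_iUnion hmono.directed_le]
  apply iSup_le
  intro k
  refine le_trans (hmark k) (ENNReal.ofReal_le_ofReal (Real.exp_le_exp.2 ?_))
  -- final arithmetic
  have harith : L * x₀ - (L * M - K) = -(M - x₀) ^ 2 / (4 * C * M) := by
    rw [hKdef, hLdef]
    field_simp
    ring
  rw [harith]
  have hden : 4 * C * M ≤ 8 * M * C ^ 2 := by
    nlinarith [mul_pos hM0 hC, mul_nonneg (mul_nonneg hM0.le hC.le) (sub_nonneg.2 hC1)]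
  have hsq : (0:ℝ) < (M - x₀) ^ 2 := pow_pos (sub_pos.2 hM) 2
  rw [neg_div, neg_div, neg_le_neg_iff]
  exact div_le_div_of_nonneg_left hsq.le (by positivity) hden
end

section
/- Let C > 0 and (c_i)_{i≥N} nonnegative reals. Let (X_i)_{i≥N} be an adapted process with E[X_{i+1} | F_i] ≥ (1 + c_i) X_i, X_N > 0, and increments satisfying X_{i+1} = X_i or X_i + 1 ≤ X_{i+1} ≤ X_i + C. Then for any M ≤ X_N − 8C², P(∃ n ≥ N such that X_n ≤ M ∏_{i=N}^{n−1}(1+c_i) | F_{X_N}) ≤ 2 exp(−(M − X_N)²/(16 X_N C²)). -/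
open MeasureTheory Finset

set_option maxHeartbeats 1000000


/-- quadratic lower bound for 1 - exp(-t) -/
lemma one_sub_exp_neg_ge (t : ℝ) (ht : 0 ≤ t) : t - t ^ 2 ≤ 1 - Real.exp (-t) := by
  have h1 : 1 + t ≤ Real.exp t := by linarith [Real.add_one_le_exp t]
  have hp : (0:ℝ) < 1 + t := by linarith
  have h2 : Real.exp (-t) ≤ (1 + t)⁻¹ := by
    rw [Real.exp_neg]
    exact inv_anti₀ hp h1
  have h3 : (1:ℝ) - (1+t)⁻¹ = t / (1+t) := by field_simp; ring
  have h4 : t - t^2 ≤ t / (1+t) := by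
    rw [div_eq_mul_inv, ← sub_nonneg]
    have : t * (1+t)⁻¹ - (t - t^2) = t^3 * (1+t)⁻¹ := by
      field_simp; ring
    rw [this]
    positivity
  nlinarith [h4, h2, h3]

/-- two-point concavity of sqrt -/
lemma sqrt_two_point (x Cv a b : ℝ) (hx : 0 ≤ x) (hC : 0 ≤ Cv) (ha : 0 ≤ a) (hb : 0 ≤ b)
    (hab : a + b = 1) : a * Real.sqrt x + b * Real.sqrt (x + Cv) ≤ Real.sqrt (x + b * Cv) := by
  have h1 : Real.sqrt x ^ 2 = x := Real.sq_sqrt hx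
  have h2 : Real.sqrt (x + Cv) ^ 2 = x + Cv := Real.sq_sqrt (by linarith)
  have h3 : 0 ≤ Real.sqrt x := Real.sqrt_nonneg _
  have h4 : 0 ≤ Real.sqrt (x + Cv) := Real.sqrt_nonneg _
  rw [show x + b * Cv = x + b * Cv by rfl]
  rw [← Real.sqrt_sq (by positivity : (0:ℝ) ≤ a * Real.sqrt x + b * Real.sqrt (x + Cv))] 
  apply Real.sqrt_le_sqrt
  have key : Real.sqrt x * Real.sqrt (x + Cv) ≤ x + Cv / 2 := by
    nlinarith [sq_nonneg (Real.sqrt x - Real.sqrt (x + Cv))]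
  have haa : a = 1 - b := by linarith
  subst haa
  nlinarith [mul_le_mul_of_nonneg_left key (by positivity : (0:ℝ) ≤ 2*((1-b)*b)),
    mul_nonneg ha hb]

/-- two point convexity of exp -/
lemma exp_two_point (u v a b : ℝ) (ha : 0 ≤ a) (hb : 0 ≤ b) (hab : a + b = 1) :
    Real.exp (a * u + b * v) ≤ a * Real.exp u + b * Real.exp v := by
  have := convexOn_exp.2 (Set.mem_univ u) (Set.mem_univ v) ha hb hab
  simpa [smul_eq_mul] using this

/-- chord bound for t ↦ exp(-l√(x+t)) on [0,C] -/
lemma chord_bound (x Cv l t : ℝ) (hx : 0 ≤ x) (hC : 0 < Cv) (hl : 0 ≤ l)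
    (ht0 : 0 ≤ t) (htC : t ≤ Cv) :
    Real.exp (-(l * Real.sqrt (x + t))) ≤ Real.exp (-(l * Real.sqrt x))
      - (Real.exp (-(l * Real.sqrt x)) - Real.exp (-(l * Real.sqrt (x + Cv)))) / Cv * t := by
  set a : ℝ := 1 - t / Cv with ha_def
  set b : ℝ := t / Cv with hb_def
  have ha : 0 ≤ a := by rw [ha_def]; rw [sub_nonneg]; exact div_le_one_of_le₀ htC hC.le
  have hb : 0 ≤ b := by positivity
  have hab : a + b = 1 := by rw [ha_def, hb_def]; ring
  have hxt : x + t = x + b * Cv := by rw [hb_def]; field_simp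
  have h1 : a * Real.sqrt x + b * Real.sqrt (x + Cv) ≤ Real.sqrt (x + b * Cv) :=
    sqrt_two_point x Cv a b hx hC.le ha hb hab
  have h2 : -(l * Real.sqrt (x + t)) ≤ a * (-(l * Real.sqrt x)) + b * (-(l * Real.sqrt (x + Cv))) := by
    rw [hxt]
    have := mul_le_mul_of_nonneg_left h1 hl
    nlinarith
  calc Real.exp (-(l * Real.sqrt (x + t)))
      ≤ Real.exp (a * (-(l * Real.sqrt x)) + b * (-(l * Real.sqrt (x + Cv)))) := Real.exp_le_exp.2 h2
    _ ≤ a * Real.exp (-(l * Real.sqrt x)) + b * Real.exp (-(l * Real.sqrt (x + Cv))) :=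
        exp_two_point _ _ a b ha hb hab
    _ = Real.exp (-(l * Real.sqrt x))
      - (Real.exp (-(l * Real.sqrt x)) - Real.exp (-(l * Real.sqrt (x + Cv)))) / Cv * t := by
        rw [ha_def, hb_def]; field_simp; ring


section Stop
variable {Ω : Type*} (K : ℕ → Ω → Prop) (N n : ℕ) (ω : Ω)

/-- index of first hit of `K` in `[N, n]`, or `n` if none -/
noncomputable def stopIdx : ℕ := sInf {k | k = n ∨ (N ≤ k ∧ k ≤ n ∧ K k ω)}

lemma stopIdx_mem : stopIdx K N n ω ∈ {k | k = n ∨ (N ≤ k ∧ k ≤ n ∧ K k ω)} :=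
  Nat.sInf_mem ⟨n, Or.inl rfl⟩

lemma stopIdx_le : stopIdx K N n ω ≤ n := by
  rcases stopIdx_mem K N n ω with h | h
  · exact h.le
  · exact h.2.1

lemma stopIdx_ge (hNn : N ≤ n) : N ≤ stopIdx K N n ω := by
  rcases stopIdx_mem K N n ω with h | h
  · rw [h]; exact hNn
  · exact h.1

lemma stopIdx_self : stopIdx K N N ω = N :=
  le_antisymm (stopIdx_le K N N ω) (stopIdx_ge K N N ω le_rfl)

lemma stopIdx_nohit (h : ∀ k, N ≤ k → k ≤ n → ¬ K k ω) : stopIdx K N n ω = n := by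
  rcases stopIdx_mem K N n ω with h' | h'
  · exact h'
  · exact absurd h'.2.2 (h _ h'.1 h'.2.1)

lemma stopIdx_succ_nohit (h : ∀ k, N ≤ k → k ≤ n → ¬ K k ω) :
    stopIdx K N (n + 1) ω = n + 1 := by
  rcases stopIdx_mem K N (n+1) ω with h' | h'
  · exact h'
  · rcases Nat.lt_or_ge (stopIdx K N (n+1) ω) (n+1) with hlt | hge
    · exact absurd h'.2.2 (h _ h'.1 (Nat.lt_succ_iff.mp hlt))
    · exact le_antisymm (stopIdx_le _ _ _ _) hge

lemma stopIdx_hit (hNn : N ≤ n) {k0 : ℕ} (hk0N : N ≤ k0) (hk0n : k0 ≤ n) (hK : K k0 ω) :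
    N ≤ stopIdx K N n ω ∧ K (stopIdx K N n ω) ω := by
  have hle : stopIdx K N n ω ≤ k0 := Nat.sInf_le (Or.inr ⟨hk0N, hk0n, hK⟩)
  rcases stopIdx_mem K N n ω with h' | h'
  · have : k0 = n := le_antisymm hk0n (h' ▸ hle)
    exact ⟨by rw [h']; exact hNn, by rw [h', ← this]; exact hK⟩
  · exact ⟨h'.1, h'.2.2⟩

lemma stopIdx_succ_hit (hNn : N ≤ n) {k0 : ℕ} (hk0N : N ≤ k0) (hk0n : k0 ≤ n) (hK : K k0 ω) :
    stopIdx K N (n + 1) ω = stopIdx K N n ω := by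
  obtain ⟨hsN, hsK⟩ := stopIdx_hit K N n ω hNn hk0N hk0n hK
  have hsn : stopIdx K N n ω ≤ n := stopIdx_le _ _ _ _
  apply le_antisymm
  · exact Nat.sInf_le (Or.inr ⟨hsN, hsn.trans (Nat.le_succ n), hsK⟩)
  · have hle : stopIdx K N (n+1) ω ≤ k0 := Nat.sInf_le (Or.inr ⟨hk0N, hk0n.trans (Nat.le_succ n), hK⟩)
    rcases stopIdx_mem K N (n+1) ω with h' | h'
    · omega
    · exact Nat.sInf_le (Or.inr ⟨h'.1, hle.trans hk0n, h'.2.2⟩)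

end Stop

section PP
variable (c : ℕ → ℝ) (N : ℕ)

/-- running product -/
noncomputable def PP (n : ℕ) : ℝ := ∏ i ∈ Finset.Ico N n, (1 + c i)

lemma PP_one_le (hc : ∀ i, 0 ≤ c i) (n : ℕ) : 1 ≤ PP c N n := by
  rw [PP]
  calc (1:ℝ) = ∏ _i ∈ Finset.Ico N n, (1:ℝ) := by simp
    _ ≤ ∏ i ∈ Finset.Ico N n, (1 + c i) :=
        Finset.prod_le_prod (fun i _ => by norm_num) (fun i _ => by linarith [hc i])

lemma PP_self : PP c N N = 1 := by simp [PP]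

lemma PP_pos (hc : ∀ i, 0 ≤ c i) (n : ℕ) : 0 < PP c N n :=
  lt_of_lt_of_le one_pos (PP_one_le c N hc n)

lemma PP_mono (hc : ∀ i, 0 ≤ c i) {k n : ℕ} (h : k ≤ n) : PP c N k ≤ PP c N n := by
  rcases le_or_gt N k with hNk | hkN
  · have hsplit : PP c N k * ∏ i ∈ Finset.Ico k n, (1 + c i) = PP c N n := by
      rw [PP, PP]
      exact Finset.prod_Ico_consecutive _ hNk h
    have h1 : (1:ℝ) ≤ ∏ i ∈ Finset.Ico k n, (1 + c i) := by
      calc (1:ℝ) = ∏ _i ∈ Finset.Ico k n, (1:ℝ) := by simp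
        _ ≤ ∏ i ∈ Finset.Ico k n, (1 + c i) :=
          Finset.prod_le_prod (fun i _ => by norm_num) (fun i _ => by linarith [hc i])
    nlinarith [PP_pos c N hc k, PP_one_le c N hc k]
  · have : PP c N k = 1 := by
      rw [PP, Finset.Ico_eq_empty (by omega), Finset.prod_empty]
    rw [this]; exact PP_one_le c N hc n

lemma PP_succ {n : ℕ} (h : N ≤ n) : PP c N (n + 1) = PP c N n * (1 + c n) := by
  rw [PP, PP]
  exact Finset.prod_Ico_succ_top h _

end PP

/-- core inequality, sqrt-free -/
lemma me4_core (C r0 g cc x m r q v : ℝ) (hC : 1 ≤ C) (hr0 : 0 < r0) (hg : 0 < g)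
    (hc : 0 ≤ cc) (hm : 0 ≤ m) (hr2 : r ^ 2 = x) (hq2 : q ^ 2 = x + C)
    (hrr0 : r0 ≤ r) (hqr : r ≤ q) (hv : v ≤ 1 + cc / 2)
    (hbar : m + (C / (2 * r0) + g / 2) ≤ r) :
    1 - cc * x / C * (1 - Real.exp (-(g / C * (q - r))))
      ≤ Real.exp (-(g / C * (m * v - m))) := by
  have hC0 : (0:ℝ) < C := lt_of_lt_of_le one_pos hC
  have hrpos : 0 < r := lt_of_lt_of_le hr0 hrr0
  have hqpos : 0 < q := lt_of_lt_of_le hrpos hqr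
  have hspos : 0 < q + r := by linarith
  have hx0 : (0:ℝ) ≤ x := by nlinarith
  have ht_eq : g / C * (q - r) = g / (q + r) := by
    have hqr_eq : (q - r) * (q + r) = C := by linear_combination hq2 - hr2
    field_simp
    linear_combination hqr_eq
  have ht0 : 0 ≤ g / C * (q - r) := by
    apply mul_nonneg (by positivity); linarith
  have hu1 : cc * x / C * (g / C * (q - r) - (g / C * (q - r)) ^ 2)
      ≤ cc * x / C * (1 - Real.exp (-(g / C * (q - r)))) :=
    mul_le_mul_of_nonneg_left (one_sub_exp_neg_ge _ ht0) (by positivity)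
  have hbar' : 2 * r0 * m + C + g * r0 ≤ 2 * r0 * r := by
    have h := mul_le_mul_of_nonneg_left hbar (by positivity : (0:ℝ) ≤ 2 * r0)
    have e1 : 2 * r0 * (m + (C / (2 * r0) + g / 2)) = 2 * r0 * m + C + g * r0 := by
      field_simp; ring
    rw [e1] at h; linarith
  have hA1 : (2*r0*m)*(q+r)^2 ≤ (2*r0*r - C - g*r0)*(q+r)^2 :=
    mul_le_mul_of_nonneg_right (by linarith) (sq_nonneg _)
  have hA2 : 2*x*(q+r) - r*(q+r)^2 = -(r*C) := by
    linear_combination (-(2*q+r)) * hr2 - r * hq2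
  have hA3 : 4*x ≤ (q+r)^2 := by
    have B0 : 0 ≤ (q-r)*(q+3*r) := mul_nonneg (by linarith) (by linarith)
    linarith only [B0, hr2]
  have hA4 : 2*r0*r*C ≤ C*(q+r)^2 := by
    have B1 := mul_le_mul_of_nonneg_left hA3 hC0.le
    have B2 := mul_le_mul_of_nonneg_left hrr0 (mul_nonneg hC0.le hrpos.le)
    have B3 : C*(r^2) = C*x := by rw [hr2]
    have B4 : (0:ℝ) ≤ C*x := mul_nonneg hC0.le hx0
    linarith only [B1, B2, B3, B4]
  have hA5 : (g*r0)*(4*x) ≤ (g*r0)*(q+r)^2 :=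
    mul_le_mul_of_nonneg_left hA3 (by positivity)
  have hA2' : 2*r0*(2*x*(q+r) - r*(q+r)^2) = 2*r0*(-(r*C)) := by rw [hA2]
  have T : 2*r0*(m*(q+r)^2) ≤ 2*r0*(2*x*((q+r)-g)) := by
    linarith only [hA1, hA2', hA4, hA5]
  have hpoly : m * (q + r) ^ 2 ≤ 2 * x * ((q + r) - g) :=
    le_of_mul_le_mul_left (by linarith only [T]) (by positivity : (0:ℝ) < 2*r0)
  have hveq : g / C * (m * v - m) ≤ g / C * (m * cc / 2) := by
    apply mul_le_mul_of_nonneg_left _ (by positivity)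
    nlinarith [hv, hm]
  have hmain : g / C * (m * cc / 2)
      ≤ cc * x / C * (g / C * (q - r) - (g / C * (q - r)) ^ 2) := by
    rw [ht_eq]
    have expand : cc * x / C * (g / (q+r) - (g / (q+r)) ^ 2)
        = cc * g * (x * ((q + r) - g)) / (C * (q + r) ^ 2) := by
      field_simp
    have lhs_eq : g / C * (m * cc / 2) = g * (m * cc) / (2 * C) := by ring
    rw [expand, lhs_eq, div_le_div_iff₀ (by positivity) (by positivity)]
    have hstep := mul_le_mul_of_nonneg_left hpoly (mul_nonneg hc hg.le)
    have hstepC := mul_le_mul_of_nonneg_left hstep hC0.le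
    linarith only [hstepC]
  have huv : g / C * (m * v - m) ≤ cc * x / C * (1 - Real.exp (-(g / C * (q - r)))) :=
    le_trans hveq (le_trans hmain hu1)
  have h1u : 1 - cc * x / C * (1 - Real.exp (-(g / C * (q - r))))
      ≤ Real.exp (-(cc * x / C * (1 - Real.exp (-(g / C * (q - r)))))) := by
    have := Real.add_one_le_exp (-(cc * x / C * (1 - Real.exp (-(g / C * (q - r))))))
    linarith
  refine le_trans h1u (Real.exp_le_exp.2 (by linarith))

/-- key one-step inequality -/
lemma me4_key (C r0 g cc x m : ℝ) (hC : 1 ≤ C) (hr0 : 0 < r0) (hg : 0 < g)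
    (hc : 0 ≤ cc) (hx : r0 ^ 2 ≤ x) (hm : 0 ≤ m)
    (hbar : m + (C / (2 * r0) + g / 2) ≤ Real.sqrt x) :
    1 - cc * x / C * (1 - Real.exp (-(g / C * (Real.sqrt (x + C) - Real.sqrt x))))
      ≤ Real.exp (-(g / C * (m * Real.sqrt (1 + cc) - m))) := by
  have hC0 : (0:ℝ) < C := lt_of_lt_of_le one_pos hC
  have hx0 : (0:ℝ) ≤ x := le_trans (by positivity) hx
  apply me4_core C r0 g cc x m (Real.sqrt x) (Real.sqrt (x + C)) (Real.sqrt (1 + cc))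
    hC hr0 hg hc hm (Real.sq_sqrt hx0) (Real.sq_sqrt (by linarith))
  · rw [← Real.sqrt_sq hr0.le]; exact Real.sqrt_le_sqrt hx
  · exact Real.sqrt_le_sqrt (by linarith)
  · rw [← Real.sqrt_sq (by linarith : (0:ℝ) ≤ 1 + cc / 2)]
    exact Real.sqrt_le_sqrt (by nlinarith)
  · exact hbar


lemma me4_numeric (C x₀ M : ℝ) (hC : 1 ≤ C) (hx₀ : 0 < x₀) (hM : 0 < M)
    (hMx : M ≤ x₀ - 8 * C ^ 2) :
    (M - x₀) ^ 2 / (16 * x₀ * C ^ 2) ≤ (Real.sqrt x₀ - Real.sqrt M) / C *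
      ((Real.sqrt x₀ - Real.sqrt M) - (C / (2 * Real.sqrt x₀) + (Real.sqrt x₀ - Real.sqrt M) / 2)) := by
  have hC0 : (0:ℝ) < C := lt_of_lt_of_le one_pos hC
  set r0 := Real.sqrt x₀ with hr0def
  set sm := Real.sqrt M with hsmdef
  have hr02 : r0 ^ 2 = x₀ := Real.sq_sqrt hx₀.le
  have hsm2 : sm ^ 2 = M := Real.sq_sqrt hM.le
  have hr0pos : 0 < r0 := Real.sqrt_pos.2 hx₀
  have hsm0 : 0 ≤ sm := Real.sqrt_nonneg _
  have hsmr0 : sm < r0 := by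
    rw [hsmdef, hr0def]
    exact Real.sqrt_lt_sqrt hM.le (by nlinarith)
  set g := r0 - sm with hgdef
  have hgpos : 0 < g := by rw [hgdef]; linarith
  have hfact : x₀ - M = g * (r0 + sm) := by rw [hgdef]; linear_combination hsm2 - hr02
  have hn1 : 8 * C ^ 2 ≤ 2 * g * r0 := by nlinarith [hfact, mul_le_mul_of_nonneg_left (by linarith : r0 + sm ≤ 2 * r0) hgpos.le]
  have T1 : (M - x₀) ^ 2 / (16 * x₀ * C ^ 2) ≤ g ^ 2 / (4 * C ^ 2) := by
    rw [div_le_div_iff₀ (by positivity) (by positivity)]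
    have h1 : x₀ - M ≤ g * (2 * r0) := by
      rw [hfact]; exact mul_le_mul_of_nonneg_left (by linarith) hgpos.le
    have h2 : (x₀ - M) ^ 2 ≤ (g * (2 * r0)) ^ 2 := by
      apply pow_le_pow_left₀ (by nlinarith) h1
    have h3 : (g * (2 * r0)) ^ 2 * (4 * C ^ 2) = g ^ 2 * (16 * x₀ * C ^ 2) := by
      rw [← hr02]; ring
    nlinarith [mul_le_mul_of_nonneg_right h2 (by positivity : (0:ℝ) ≤ 4 * C ^ 2)]
  have T2 : g ^ 2 / (4 * C ^ 2) ≤ g / C * (g - (C / (2 * r0) + g / 2)) := by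
    have hrhs : g / C * (g - (C / (2 * r0) + g / 2)) = g ^ 2 / (2 * C) - g / (2 * r0) := by
      field_simp; ring
    have n2 : g / (2 * r0) ≤ g ^ 2 / (8 * C ^ 2) := by
      rw [div_le_div_iff₀ (by positivity) (by positivity)]
      nlinarith [mul_le_mul_of_nonneg_left hn1 hgpos.le]
    have n3 : g ^ 2 / (4 * C ^ 2) + g ^ 2 / (8 * C ^ 2) ≤ g ^ 2 / (2 * C) := by
      rw [div_add_div _ _ (by positivity) (by positivity), div_le_div_iff₀ (by positivity) (by positivity)]
      nlinarith [mul_nonneg (mul_nonneg (pow_nonneg hC0.le 3) (sq_nonneg g)) (sub_nonneg.2 hC),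
        mul_nonneg (mul_nonneg (pow_nonneg hC0.le 4) (sq_nonneg g)) (le_of_lt hC0)]
    rw [hrhs]; linarith
  linarith

/-- main case of the theorem -/
theorem me4_main
    {Ω : Type*} {m0 : MeasurableSpace Ω} (μ : Measure Ω) [IsProbabilityMeasure μ]
    (ℱ : Filtration ℕ m0) (X : ℕ → Ω → ℝ) (N : ℕ)
    (C : ℝ) (hC : 0 < C) (c : ℕ → ℝ) (hc : ∀ i, 0 ≤ c i)
    (hadapt : Adapted ℱ X) (hint : ∀ i, Integrable (X i) μ)
    (hrec : ∀ i, N ≤ i → (fun ω => (1 + c i) * X i ω) ≤ᵐ[μ] μ[X (i + 1) | ℱ i])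
    (hinc : ∀ i ω, N ≤ i →
      X (i + 1) ω = X i ω ∨ (X i ω + 1 ≤ X (i + 1) ω ∧ X (i + 1) ω ≤ X i ω + C))
    (x₀ M : ℝ) (hstart : ∀ ω, X N ω = x₀) (hx₀ : 0 < x₀)
    (hM : M ≤ x₀ - 8 * C ^ 2) (hC1 : 1 ≤ C) (hM0 : 0 < M)
    (hXmono : ∀ n, N ≤ n → ∀ ω, x₀ ≤ X n ω) :
    μ {ω | ∃ n, N ≤ n ∧ X n ω ≤ M * PP c N n}
      ≤ ENNReal.ofReal (2 * Real.exp (-(M - x₀) ^ 2 / (16 * x₀ * C ^ 2))) := by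
  classical
  set r0 : ℝ := Real.sqrt x₀ with hr0def
  set g : ℝ := r0 - Real.sqrt M with hgdef
  set Ec : ℝ := C / (2 * r0) + g / 2 with hEcdef
  set l : ℝ := g / C with hldef
  have hr0pos : 0 < r0 := Real.sqrt_pos.2 hx₀
  have hgpos : 0 < g := by
    rw [hgdef, hr0def]
    have := Real.sqrt_lt_sqrt hM0.le (by nlinarith : M < x₀)
    linarith
  have hgler0 : g ≤ r0 := by
    rw [hgdef]; have := Real.sqrt_nonneg M; linarith
  have hl0 : 0 ≤ l := by rw [hldef]; positivity
  have hEc0 : 0 ≤ Ec := by rw [hEcdef]; positivity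
  set K : ℕ → Ω → Prop := fun k ω => Real.sqrt (X k ω) ≤ Real.sqrt (M * PP c N k) + Ec
    with hKdef
  set hf : ℕ → Ω → ℝ :=
    fun k ω => Real.exp (l * (Real.sqrt (M * PP c N k) - Real.sqrt (X k ω))) with hfdef
  set Hp : ℕ → Ω → ℝ := fun n ω => hf (stopIdx K N n ω) ω with hHdef
  set hitS : ℕ → Set Ω := fun n => {ω | ∃ k, N ≤ k ∧ k ≤ n ∧ K k ω} with hhitdef
  -- measurability
  have hXmeas : ∀ n, Measurable (X n) := fun n => ((hadapt n).mono (ℱ.le n) le_rfl)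
  have hKmeasF : ∀ k, MeasurableSet[ℱ k] {ω | K k ω} := by
    intro k
    have : Measurable[ℱ k] (fun ω => Real.sqrt (X k ω)) :=
      Real.continuous_sqrt.measurable.comp (hadapt k)
    exact this measurableSet_Iic
  have hhitF : ∀ n, MeasurableSet[ℱ n] (hitS n) := by
    intro n
    have : hitS n = ⋃ (k : ℕ), ⋃ (_ : N ≤ k ∧ k ≤ n), {ω | K k ω} := by
      ext ω; simp [hhitdef, and_assoc]
    rw [this]
    refine MeasurableSet.iUnion fun k => MeasurableSet.iUnion fun hk => ?_
    exact (ℱ.mono hk.2) _ (hKmeasF k)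
  have hhitM : ∀ n, MeasurableSet (hitS n) := fun n => (ℱ.le n) _ (hhitF n)
  have hfmeas : ∀ k, Measurable (hf k) := by
    intro k
    apply Measurable.exp
    exact (measurable_const.sub (Real.continuous_sqrt.measurable.comp (hXmeas k))).const_mul l
  have hfpos : ∀ k ω, 0 < hf k ω := fun k ω => Real.exp_pos _
  have hfbound : ∀ n k ω, k ≤ n → hf k ω ≤ Real.exp (l * Real.sqrt (M * PP c N n)) := by
    intro n k ω hkn
    apply Real.exp_le_exp.2
    have h1 : Real.sqrt (M * PP c N k) ≤ Real.sqrt (M * PP c N n) :=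
      Real.sqrt_le_sqrt (by
        have := PP_mono c N hc hkn
        nlinarith [PP_one_le c N hc k])
    have h2 : 0 ≤ Real.sqrt (X k ω) := Real.sqrt_nonneg _
    have := mul_le_mul_of_nonneg_left (by linarith : Real.sqrt (M * PP c N k) - Real.sqrt (X k ω) ≤ Real.sqrt (M * PP c N n)) hl0
    linarith
  have hHrec_hit : ∀ n, N ≤ n → ∀ ω ∈ hitS n, Hp (n+1) ω = Hp n ω := by
    intro n hn ω hω
    obtain ⟨k0, hk1, hk2, hk3⟩ := hω
    rw [hHdef]
    simp only
    rw [stopIdx_succ_hit K N n ω hn hk1 hk2 hk3]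
  have hHrec_nohit : ∀ n, N ≤ n → ∀ ω ∉ hitS n, Hp (n+1) ω = hf (n+1) ω ∧ Hp n ω = hf n ω := by
    intro n hn ω hω
    have hno : ∀ k, N ≤ k → k ≤ n → ¬ K k ω := by
      intro k h1 h2 h3; exact hω ⟨k, h1, h2, h3⟩
    constructor
    · rw [hHdef]; simp only; rw [stopIdx_succ_nohit K N n ω hno]
    · rw [hHdef]; simp only; rw [stopIdx_nohit K N n ω hno]
  have hHN : ∀ ω, Hp N ω = hf N ω := by
    intro ω; rw [hHdef]; simp only; rw [stopIdx_self]
  have hHmeas : ∀ n, N ≤ n → Measurable (Hp n) := by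
    intro n hn
    induction n, hn using Nat.le_induction with
    | base =>
      have : Hp N = hf N := funext hHN
      rw [this]; exact hfmeas N
    | succ n hn ih =>
      have hpiece : Hp (n+1) = (hitS n).piecewise (Hp n) (hf (n+1)) := by
        funext ω
        by_cases hω : ω ∈ hitS n
        · rw [Set.piecewise_eq_of_mem _ _ _ hω, hHrec_hit n hn ω hω]
        · rw [Set.piecewise_eq_of_notMem _ _ _ hω, (hHrec_nohit n hn ω hω).1]
      rw [hpiece]
      exact Measurable.piecewise (hhitM n) ih (hfmeas (n+1))
  have hHbound : ∀ n, N ≤ n → ∀ ω, Hp n ω ≤ Real.exp (l * Real.sqrt (M * PP c N n)) := by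
    intro n hn ω
    exact hfbound n _ ω (stopIdx_le K N n ω)
  have hHpos : ∀ n ω, 0 < Hp n ω := fun n ω => hfpos _ ω
  have hHint : ∀ n, N ≤ n → Integrable (Hp n) μ := by
    intro n hn
    refine Integrable.mono' (integrable_const (Real.exp (l * Real.sqrt (M * PP c N n))))
      (hHmeas n hn).aestronglyMeasurable (ae_of_all _ fun ω => ?_)
    rw [Real.norm_eq_abs, abs_of_pos (hHpos n ω)]
    exact hHbound n hn ω
  -- the key one-step bound over the continuation set
  have hXnn : ∀ k, N ≤ k → ∀ ω, 0 ≤ X k ω := fun k hk ω => le_trans hx₀.le (hXmono k hk ω)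
  have hsqXmF : ∀ k, Measurable[ℱ k] fun ω => Real.sqrt (X k ω) :=
    fun k => Real.continuous_sqrt.measurable.comp (hadapt k)
  have core : ∀ n, N ≤ n → ∫ ω in (hitS n)ᶜ, hf (n+1) ω ∂μ ≤ ∫ ω in (hitS n)ᶜ, hf n ω ∂μ := by
    intro n hn
    have hn1 : N ≤ n + 1 := hn.trans (Nat.le_succ n)
    set A : Set Ω := (hitS n)ᶜ with hAdef
    have hAm : MeasurableSet A := (hhitM n).compl
    have hAF : MeasurableSet[ℱ n] A := (hhitF n).compl
    set β : Ω → ℝ := fun ω =>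
      (Real.exp (-(l * Real.sqrt (X n ω))) - Real.exp (-(l * Real.sqrt (X n ω + C)))) / C
      with hβdef
    have hβmeasF : Measurable[ℱ n] β := by
      apply Measurable.div_const
      apply Measurable.sub
      · exact Real.measurable_exp.comp (((hsqXmF n).const_mul l).neg)
      · apply Real.measurable_exp.comp
        apply Measurable.neg
        apply Measurable.const_mul
        exact Real.continuous_sqrt.measurable.comp ((hadapt n).add_const C)
    have hβmeas : Measurable β := hβmeasF.mono (ℱ.le n) le_rfl
    have hβ0 : ∀ ω, 0 ≤ β ω := by
      intro ω; rw [hβdef]; simp only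
      apply div_nonneg _ hC.le
      have h1 : Real.sqrt (X n ω) ≤ Real.sqrt (X n ω + C) := Real.sqrt_le_sqrt (by linarith)
      have h2 := mul_le_mul_of_nonneg_left h1 hl0
      have h3 := Real.exp_le_exp.2 (by linarith :
        -(l * Real.sqrt (X n ω + C)) ≤ -(l * Real.sqrt (X n ω)))
      linarith
    have hβbd : ∀ ω, β ω ≤ 1 / C := by
      intro ω; rw [hβdef]; simp only
      rw [div_le_div_iff₀ hC hC]
      have e1 : Real.exp (-(l * Real.sqrt (X n ω))) ≤ 1 := by
        rw [← Real.exp_zero]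
        apply Real.exp_le_exp.2
        have : 0 ≤ l * Real.sqrt (X n ω) := mul_nonneg hl0 (Real.sqrt_nonneg _)
        linarith
      have e2 : 0 < Real.exp (-(l * Real.sqrt (X n ω + C))) := Real.exp_pos _
      nlinarith [hC]
    have hβnorm : ∀ ω, ‖β ω‖ ≤ 1 / C := by
      intro ω; rw [Real.norm_eq_abs, abs_of_nonneg (hβ0 ω)]; exact hβbd ω
    -- chord bound pointwise
    have hchord : ∀ ω, Real.exp (-(l * Real.sqrt (X (n+1) ω)))
        ≤ Real.exp (-(l * Real.sqrt (X n ω))) - β ω * (X (n+1) ω - X n ω) := by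
      intro ω
      have ht0 : 0 ≤ X (n+1) ω - X n ω := by
        rcases hinc n ω hn with h | h
        · rw [h]; linarith
        · linarith [h.1]
      have htC : X (n+1) ω - X n ω ≤ C := by
        rcases hinc n ω hn with h | h
        · rw [h]; linarith
        · linarith [h.2]
      have hb := chord_bound (X n ω) C l (X (n+1) ω - X n ω) (hXnn n hn ω) hC hl0 ht0 htC
      have hxt : X n ω + (X (n+1) ω - X n ω) = X (n+1) ω := by ring
      rw [hxt] at hb
      rw [hβdef]; simp only
      linarith [hb]
    -- integrability
    have hIe : ∀ k, Integrable (fun ω => Real.exp (-(l * Real.sqrt (X k ω)))) μ := by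
      intro k
      refine Integrable.mono' (integrable_const 1)
        ((Real.measurable_exp.comp
          (((Real.continuous_sqrt.measurable.comp (hXmeas k)).const_mul l).neg)).aestronglyMeasurable)
        (ae_of_all _ fun ω => ?_)
      rw [Real.norm_eq_abs, abs_of_pos (Real.exp_pos _), ← Real.exp_zero]
      apply Real.exp_le_exp.2
      have : 0 ≤ l * Real.sqrt (X k ω) := mul_nonneg hl0 (Real.sqrt_nonneg _)
      linarith
    have hIβX : ∀ k, Integrable (fun ω => β ω * X k ω) μ := fun k =>
      Integrable.bdd_mul (hint k) hβmeas.aestronglyMeasurable (ae_of_all _ hβnorm)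
    -- conditional expectation step
    have hKey : ∫ ω in A, β ω * ((1 + c n) * X n ω) ∂μ ≤ ∫ ω in A, β ω * X (n+1) ω ∂μ := by
      set φ : Ω → ℝ := A.indicator β with hφdef
      have hφm0 : Measurable φ := hβmeas.indicator hAm
      have hφF : StronglyMeasurable[ℱ n] φ :=
        (hβmeasF.stronglyMeasurable).indicator hAF
      have hφ0 : ∀ ω, 0 ≤ φ ω := fun ω => Set.indicator_nonneg (fun ω _ => hβ0 ω) ω
      have hφnorm : ∀ ω, ‖φ ω‖ ≤ 1 / C := by
        intro ω
        rw [hφdef]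
        by_cases h : ω ∈ A
        · rw [Set.indicator_of_mem h]; exact hβnorm ω
        · rw [Set.indicator_of_notMem h]; simp; positivity
      have hIφX : Integrable (φ * X (n+1)) μ :=
        Integrable.bdd_mul (hint (n+1)) hφm0.aestronglyMeasurable (ae_of_all _ hφnorm)
      have hIφcond : Integrable (φ * μ[X (n+1)|ℱ n]) μ :=
        Integrable.bdd_mul integrable_condExp hφm0.aestronglyMeasurable (ae_of_all _ hφnorm)
      have hIφcX : Integrable (fun ω => φ ω * ((1 + c n) * X n ω)) μ :=
        Integrable.bdd_mul ((hint n).const_mul (1 + c n)) hφm0.aestronglyMeasurable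
          (ae_of_all _ hφnorm)
      have hmul := condExp_mul_of_stronglyMeasurable_left hφF hIφX (hint (n+1))
      have hind : ∀ f : Ω → ℝ, (∫ ω in A, β ω * f ω ∂μ) = ∫ ω, φ ω * f ω ∂μ := by
        intro f
        rw [← integral_indicator hAm]
        congr 1
        funext ω
        rw [hφdef]
        by_cases h : ω ∈ A
        · rw [Set.indicator_of_mem h, Set.indicator_of_mem h]
        · rw [Set.indicator_of_notMem h, Set.indicator_of_notMem h, zero_mul]
      rw [hind (fun ω => (1 + c n) * X n ω), hind (X (n+1))]
      calc ∫ ω, φ ω * ((1 + c n) * X n ω) ∂μ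
          ≤ ∫ ω, φ ω * (μ[X (n+1)|ℱ n]) ω ∂μ := by
            apply integral_mono_ae hIφcX hIφcond
            filter_upwards [hrec n hn] with ω hω
            exact mul_le_mul_of_nonneg_left hω (hφ0 ω)
        _ = ∫ ω, (μ[φ * X (n+1)|ℱ n]) ω ∂μ := (integral_congr_ae hmul).symm
        _ = ∫ ω, (φ * X (n+1)) ω ∂μ := integral_condExp (ℱ.le n)
        _ = ∫ ω, φ ω * X (n+1) ω ∂μ := rfl
    -- assembling
    have hK1 : ∀ ω, hf (n+1) ω = Real.exp (l * Real.sqrt (M * PP c N (n+1)))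
        * Real.exp (-(l * Real.sqrt (X (n+1) ω))) := by
      intro ω; rw [hfdef]; simp only; rw [← Real.exp_add]; congr 1; ring
    have hK0 : ∀ ω, hf n ω = Real.exp (l * Real.sqrt (M * PP c N n))
        * Real.exp (-(l * Real.sqrt (X n ω))) := by
      intro ω; rw [hfdef]; simp only; rw [← Real.exp_add]; congr 1; ring
    have hIchordRHS : Integrable (fun ω =>
        Real.exp (-(l * Real.sqrt (X n ω))) - β ω * (X (n+1) ω - X n ω)) μ := by
      have h1 : (fun ω => Real.exp (-(l * Real.sqrt (X n ω))) - β ω * (X (n+1) ω - X n ω))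
          = fun ω => (Real.exp (-(l * Real.sqrt (X n ω))) + β ω * X n ω) - β ω * X (n+1) ω := by
        funext ω; ring
      rw [h1]
      exact ((hIe n).add (hIβX n)).sub (hIβX (n+1))
    have hIfinal : Integrable (fun ω =>
        Real.exp (-(l * Real.sqrt (X n ω))) - c n * (β ω * X n ω)) μ :=
      (hIe n).sub ((hIβX n).const_mul (c n))
    -- pointwise star inequality on A
    have hstar : ∀ ω ∈ A, Real.exp (l * Real.sqrt (M * PP c N (n+1)))
        * (Real.exp (-(l * Real.sqrt (X n ω))) - c n * (β ω * X n ω)) ≤ hf n ω := by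
      intro ω hω
      have hnK : ¬ K n ω := fun h => hω ⟨n, hn, le_rfl, h⟩
      have hbar : Real.sqrt (M * PP c N n) + (C / (2 * r0) + g / 2) ≤ Real.sqrt (X n ω) := by
        rw [hKdef] at hnK
        simp only [not_le] at hnK
        rw [hEcdef] at hnK
        linarith
      have hx' : r0 ^ 2 ≤ X n ω := by
        rw [hr0def, Real.sq_sqrt hx₀.le]; exact hXmono n hn ω
      have hkey := me4_key C r0 g (c n) (X n ω) (Real.sqrt (M * PP c N n)) hC1 hr0pos hgpos
        (hc n) hx' (Real.sqrt_nonneg _) hbar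
      rw [← hldef] at hkey
      -- factorization of the left side
      have hsplit : Real.exp (-(l * Real.sqrt (X n ω + C)))
          = Real.exp (-(l * Real.sqrt (X n ω)))
            * Real.exp (-(l * (Real.sqrt (X n ω + C) - Real.sqrt (X n ω)))) := by
        rw [← Real.exp_add]; congr 1; ring
      have hfac : Real.exp (-(l * Real.sqrt (X n ω))) - c n * (β ω * X n ω)
          = Real.exp (-(l * Real.sqrt (X n ω)))
            * (1 - c n * X n ω / C
              * (1 - Real.exp (-(l * (Real.sqrt (X n ω + C) - Real.sqrt (X n ω)))))) := by
        rw [hβdef]; simp only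
        rw [hsplit]
        field_simp
      have hm2 : Real.sqrt (M * PP c N (n+1))
          = Real.sqrt (M * PP c N n) * Real.sqrt (1 + c n) := by
        rw [PP_succ c N hn, show M * (PP c N n * (1 + c n)) = M * PP c N n * (1 + c n) from by ring]
        rw [Real.sqrt_mul (mul_nonneg hM0.le
          (le_trans zero_le_one (PP_one_le c N hc n))) (1 + c n)]
      rw [hfac, hK0 ω, hm2]
      have hEpos : (0:ℝ) < Real.exp (-(l * Real.sqrt (X n ω))) := Real.exp_pos _
      have step1 := mul_le_mul_of_nonneg_left
        (mul_le_mul_of_nonneg_left hkey hEpos.le)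
        (Real.exp_pos (l * (Real.sqrt (M * PP c N n) * Real.sqrt (1 + c n)))).le
      have collapse : Real.exp (l * (Real.sqrt (M * PP c N n) * Real.sqrt (1 + c n)))
          * (Real.exp (-(l * Real.sqrt (X n ω)))
            * Real.exp (-(l * (Real.sqrt (M * PP c N n) * Real.sqrt (1 + c n)
              - Real.sqrt (M * PP c N n)))))
          = Real.exp (l * Real.sqrt (M * PP c N n)) * Real.exp (-(l * Real.sqrt (X n ω))) := by
        rw [mul_comm (Real.exp (-(l * Real.sqrt (X n ω)))) _, ← mul_assoc, ← Real.exp_add]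
        rw [mul_comm _ (Real.exp (-(l * Real.sqrt (X n ω))))]
        rw [mul_comm (Real.exp (l * Real.sqrt (M * PP c N n))) (Real.exp (-(l * Real.sqrt (X n ω))))]
        congr 1
        ring
      calc Real.exp (l * (Real.sqrt (M * PP c N n) * Real.sqrt (1 + c n)))
          * (Real.exp (-(l * Real.sqrt (X n ω)))
            * (1 - c n * X n ω / C
              * (1 - Real.exp (-(l * (Real.sqrt (X n ω + C) - Real.sqrt (X n ω)))))))
          ≤ Real.exp (l * (Real.sqrt (M * PP c N n) * Real.sqrt (1 + c n)))
            * (Real.exp (-(l * Real.sqrt (X n ω)))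
              * Real.exp (-(l * (Real.sqrt (M * PP c N n) * Real.sqrt (1 + c n)
                - Real.sqrt (M * PP c N n))))) := step1
        _ = Real.exp (l * Real.sqrt (M * PP c N n)) * Real.exp (-(l * Real.sqrt (X n ω))) :=
            collapse
    calc ∫ ω in A, hf (n+1) ω ∂μ
        = Real.exp (l * Real.sqrt (M * PP c N (n+1)))
            * ∫ ω in A, Real.exp (-(l * Real.sqrt (X (n+1) ω))) ∂μ := by
          rw [← integral_const_mul]
          exact setIntegral_congr_fun hAm fun ω _ => hK1 ω
      _ ≤ Real.exp (l * Real.sqrt (M * PP c N (n+1)))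
            * ∫ ω in A, (Real.exp (-(l * Real.sqrt (X n ω))) - β ω * (X (n+1) ω - X n ω)) ∂μ := by
          apply mul_le_mul_of_nonneg_left _ (Real.exp_pos _).le
          exact setIntegral_mono_on ((hIe (n+1)).integrableOn)
            (hIchordRHS.integrableOn) hAm (fun ω _ => hchord ω)
      _ = Real.exp (l * Real.sqrt (M * PP c N (n+1)))
            * ((∫ ω in A, (Real.exp (-(l * Real.sqrt (X n ω))) + β ω * X n ω) ∂μ)
              - ∫ ω in A, β ω * X (n+1) ω ∂μ) := by
          congr 1
          have hIsum : Integrable (fun ω => Real.exp (-(l * Real.sqrt (X n ω))) + β ω * X n ω) μ :=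
            (hIe n).add (hIβX n)
          rw [← integral_sub hIsum.integrableOn ((hIβX (n+1)).integrableOn)]
          exact setIntegral_congr_fun hAm fun ω _ => by ring
      _ ≤ Real.exp (l * Real.sqrt (M * PP c N (n+1)))
            * ((∫ ω in A, (Real.exp (-(l * Real.sqrt (X n ω))) + β ω * X n ω) ∂μ)
              - ∫ ω in A, β ω * ((1 + c n) * X n ω) ∂μ) := by
          apply mul_le_mul_of_nonneg_left _ (Real.exp_pos _).le
          linarith [hKey]
      _ = Real.exp (l * Real.sqrt (M * PP c N (n+1)))
            * ∫ ω in A, (Real.exp (-(l * Real.sqrt (X n ω))) - c n * (β ω * X n ω)) ∂μ := by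
          congr 1
          have hIsum : Integrable (fun ω => Real.exp (-(l * Real.sqrt (X n ω))) + β ω * X n ω) μ :=
            (hIe n).add (hIβX n)
          have hIβcX : Integrable (fun ω => β ω * ((1 + c n) * X n ω)) μ :=
            Integrable.bdd_mul ((hint n).const_mul (1 + c n)) hβmeas.aestronglyMeasurable
              (ae_of_all _ hβnorm)
          rw [← integral_sub hIsum.integrableOn (hIβcX.integrableOn)]
          exact setIntegral_congr_fun hAm fun ω _ => by ring
      _ = ∫ ω in A, Real.exp (l * Real.sqrt (M * PP c N (n+1)))
            * (Real.exp (-(l * Real.sqrt (X n ω))) - c n * (β ω * X n ω)) ∂μ :=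
          (integral_const_mul _ _).symm
      _ ≤ ∫ ω in A, hf n ω ∂μ :=
          setIntegral_mono_on ((hIfinal.const_mul _).integrableOn)
            ((by
              have : Integrable (hf n) μ := by
                refine Integrable.mono' (integrable_const (Real.exp (l * Real.sqrt (M * PP c N n))))
                  (hfmeas n).aestronglyMeasurable (ae_of_all _ fun ω => ?_)
                rw [Real.norm_eq_abs, abs_of_pos (hfpos n ω)]
                exact hfbound n n ω le_rfl
              exact this.integrableOn))
            hAm hstar

  -- one-step supermartingale property
  have step : ∀ n, N ≤ n → ∫ ω, Hp (n+1) ω ∂μ ≤ ∫ ω, Hp n ω ∂μ := by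
    intro n hn
    have e1 : ∫ ω in hitS n, Hp (n+1) ω ∂μ = ∫ ω in hitS n, Hp n ω ∂μ :=
      setIntegral_congr_fun (hhitM n) (fun ω hω => hHrec_hit n hn ω hω)
    have e2 : ∫ ω in (hitS n)ᶜ, Hp (n+1) ω ∂μ = ∫ ω in (hitS n)ᶜ, hf (n+1) ω ∂μ :=
      setIntegral_congr_fun (hhitM n).compl (fun ω hω => (hHrec_nohit n hn ω hω).1)
    have e3 : ∫ ω in (hitS n)ᶜ, Hp n ω ∂μ = ∫ ω in (hitS n)ᶜ, hf n ω ∂μ :=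
      setIntegral_congr_fun (hhitM n).compl (fun ω hω => (hHrec_nohit n hn ω hω).2)
    calc ∫ ω, Hp (n+1) ω ∂μ
        = ∫ ω in hitS n, Hp (n+1) ω ∂μ + ∫ ω in (hitS n)ᶜ, Hp (n+1) ω ∂μ :=
          (integral_add_compl (hhitM n) (hHint (n+1) (hn.trans (Nat.le_succ n)))).symm
      _ = ∫ ω in hitS n, Hp n ω ∂μ + ∫ ω in (hitS n)ᶜ, hf (n+1) ω ∂μ := by rw [e1, e2]
      _ ≤ ∫ ω in hitS n, Hp n ω ∂μ + ∫ ω in (hitS n)ᶜ, hf n ω ∂μ := by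
          have := core n hn; linarith
      _ = ∫ ω in hitS n, Hp n ω ∂μ + ∫ ω in (hitS n)ᶜ, Hp n ω ∂μ := by rw [e3]
      _ = ∫ ω, Hp n ω ∂μ := integral_add_compl (hhitM n) (hHint n hn)
  -- value at time N
  have base : ∫ ω, Hp N ω ∂μ = Real.exp (-(l * g)) := by
    have hval : ∀ ω, Hp N ω = Real.exp (-(l * g)) := by
      intro ω
      rw [hHN ω, hfdef]
      simp only
      rw [PP_self, mul_one, hstart ω]
      congr 1
      rw [hgdef, hr0def]
      ring
    rw [funext hval]
    simp [integral_const]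

  have bound : ∀ n, N ≤ n → ∫ ω, Hp n ω ∂μ ≤ Real.exp (-(l * g)) := by
    intro n hn
    induction n, hn using Nat.le_induction with
    | base => rw [base]
    | succ n hn ih => exact le_trans (step n hn) ih
  have markov : ∀ n, N ≤ n → μ (hitS n) ≤ ENNReal.ofReal (Real.exp (-(l * (g - Ec)))) := by
    intro n hn
    have h1 : ∀ ω ∈ hitS n, Real.exp (-(l * Ec)) ≤ Hp n ω := by
      intro ω hω
      obtain ⟨k0, hk1, hk2, hk3⟩ := hω
      obtain ⟨hsN, hsK⟩ := stopIdx_hit K N n ω hn hk1 hk2 hk3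
      rw [hHdef]; simp only
      rw [hfdef]; simp only
      apply Real.exp_le_exp.2
      have hKs : Real.sqrt (X (stopIdx K N n ω) ω)
          ≤ Real.sqrt (M * PP c N (stopIdx K N n ω)) + Ec := hsK
      have := mul_le_mul_of_nonneg_left (by linarith :
        -Ec ≤ Real.sqrt (M * PP c N (stopIdx K N n ω)) - Real.sqrt (X (stopIdx K N n ω) ω)) hl0
      linarith
    have h2 := setIntegral_ge_of_const_le_real (hhitM n) (measure_ne_top μ _) h1
      ((hHint n hn).integrableOn)
    have h3 : ∫ ω in hitS n, Hp n ω ∂μ ≤ ∫ ω, Hp n ω ∂μ :=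
      setIntegral_le_integral (hHint n hn) (ae_of_all _ fun ω => (hHpos n ω).le)
    have h4 : Real.exp (-(l * Ec)) * (μ (hitS n)).toReal ≤ Real.exp (-(l * g)) :=
      le_trans h2 (le_trans h3 (bound n hn))
    have h5 : (μ (hitS n)).toReal ≤ Real.exp (-(l * (g - Ec))) := by
      rw [← le_div_iff₀' (Real.exp_pos _)] at h4
      calc (μ (hitS n)).toReal ≤ Real.exp (-(l * g)) / Real.exp (-(l * Ec)) := h4
        _ = Real.exp (-(l * (g - Ec))) := by rw [← Real.exp_sub]; congr 1; ring
    calc μ (hitS n) = ENNReal.ofReal ((μ (hitS n)).toReal) :=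
          (ENNReal.ofReal_toReal (measure_ne_top μ _)).symm
      _ ≤ ENNReal.ofReal (Real.exp (-(l * (g - Ec)))) := ENNReal.ofReal_le_ofReal h5
  -- inclusion of the event
  have hsub : {ω | ∃ n, N ≤ n ∧ X n ω ≤ M * PP c N n} ⊆ ⋃ n, hitS n := by
    intro ω hω
    obtain ⟨n, hn, hX⟩ := hω
    refine Set.mem_iUnion.2 ⟨n, n, hn, le_rfl, ?_⟩
    rw [hKdef]; simp only
    have := Real.sqrt_le_sqrt hX
    linarith
  calc μ {ω | ∃ n, N ≤ n ∧ X n ω ≤ M * PP c N n} ≤ μ (⋃ n, hitS n) := measure_mono hsub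
    _ = ⨆ n, μ (hitS n) := by
        have hmono : Monotone hitS := by
          intro a b hab ω hω
          obtain ⟨k, hk1, hk2, hk3⟩ := hω
          exact ⟨k, hk1, hk2.trans hab, hk3⟩
        exact Directed.measure_iUnion (hmono.directed_le)
    _ ≤ ENNReal.ofReal (Real.exp (-(l * (g - Ec)))) := by
        apply iSup_le
        intro n
        calc μ (hitS n) ≤ μ (hitS (N + n)) := measure_mono (by
              intro ω hω
              obtain ⟨k, hk1, hk2, hk3⟩ := hω
              exact ⟨k, hk1, hk2.trans (Nat.le_add_left n N), hk3⟩)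
          _ ≤ ENNReal.ofReal (Real.exp (-(l * (g - Ec)))) := markov (N + n) (Nat.le_add_right N n)
    _ ≤ ENNReal.ofReal (2 * Real.exp (-(M - x₀) ^ 2 / (16 * x₀ * C ^ 2))) := by
        apply ENNReal.ofReal_le_ofReal
        have hnum := me4_numeric C x₀ M hC1 hx₀ hM0 hM
        have h1 : Real.exp (-(l * (g - Ec))) ≤ Real.exp (-(M - x₀) ^ 2 / (16 * x₀ * C ^ 2)) := by
          apply Real.exp_le_exp.2
          rw [neg_div]
          apply neg_le_neg
          have h2 : l * (g - Ec) = (Real.sqrt x₀ - Real.sqrt M) / C *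
              ((Real.sqrt x₀ - Real.sqrt M) -
                (C / (2 * Real.sqrt x₀) + (Real.sqrt x₀ - Real.sqrt M) / 2)) := by
            rw [hldef, hEcdef, hgdef, hr0def]
          rw [h2]
          exact hnum
        nlinarith [Real.exp_pos (-(M - x₀) ^ 2 / (16 * x₀ * C ^ 2))]

/-- Lemma 5.2 (me4): exponential maximal lower bound for a process with
multiplicative conditional growth and bounded jumps, started at the constant `x₀ = X_N > 0`. -/
theorem maximal_lower_bound_me4
    {Ω : Type*} {m0 : MeasurableSpace Ω} (μ : Measure Ω) [IsProbabilityMeasure μ]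
    (ℱ : Filtration ℕ m0) (X : ℕ → Ω → ℝ) (N : ℕ)
    (C : ℝ) (hC : 0 < C) (c : ℕ → ℝ) (hc : ∀ i, 0 ≤ c i)
    (hadapt : Adapted ℱ X) (hint : ∀ i, Integrable (X i) μ)
    (hrec : ∀ i, N ≤ i → (fun ω => (1 + c i) * X i ω) ≤ᵐ[μ] μ[X (i + 1) | ℱ i])
    (hinc : ∀ i ω, N ≤ i →
      X (i + 1) ω = X i ω ∨ (X i ω + 1 ≤ X (i + 1) ω ∧ X (i + 1) ω ≤ X i ω + C))
    (x₀ M : ℝ) (hstart : ∀ ω, X N ω = x₀) (hx₀ : 0 < x₀)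
    (hM : M ≤ x₀ - 8 * C ^ 2) :
    μ {ω | ∃ n, N ≤ n ∧ X n ω ≤ M * ∏ i ∈ Finset.Ico N n, (1 + c i)}
      ≤ ENNReal.ofReal (2 * Real.exp (-(M - x₀) ^ 2 / (16 * x₀ * C ^ 2))) := by
  classical
  have hXmono : ∀ n, N ≤ n → ∀ ω, x₀ ≤ X n ω := by
    intro n hn
    induction n, hn using Nat.le_induction with
    | base => intro ω; rw [hstart ω]
    | succ n hn ih =>
      intro ω
      rcases hinc n ω hn with h | h
      · rw [h]; exact ih ω
      · linarith [ih ω, h.1]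
  rcases le_or_gt M 0 with hM0 | hM0
  · have hempty : {ω | ∃ n, N ≤ n ∧ X n ω ≤ M * ∏ i ∈ Finset.Ico N n, (1 + c i)} = ∅ := by
      ext ω
      simp only [Set.mem_setOf_eq, Set.mem_empty_iff_false, iff_false, not_exists]
      rintro n ⟨hn, hle⟩
      have h1 : (1:ℝ) ≤ PP c N n := PP_one_le c N hc n
      have h2 : M * PP c N n ≤ 0 :=
        mul_nonpos_iff.2 (Or.inr ⟨hM0, by linarith⟩)
      have h3 := hXmono n hn ω
      rw [PP] at h1 h2
      linarith
    rw [hempty, measure_empty]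
    exact zero_le'
  rcases lt_or_ge C 1 with hC1 | hC1
  · -- if C < 1 the process is constant and all c i vanish for i ≥ N
    have hconst : ∀ n, N ≤ n → ∀ ω, X n ω = x₀ := by
      intro n hn
      induction n, hn using Nat.le_induction with
      | base => exact hstart
      | succ n hn ih =>
        intro ω
        rcases hinc n ω hn with h | h
        · rw [h]; exact ih ω
        · linarith [h.1, h.2]
    have hczero : ∀ i, N ≤ i → c i = 0 := by
      intro i hi
      have h := hrec i hi
      have hXconst : X (i + 1) = fun _ => x₀ := funext fun ω => hconst (i + 1) (by omega) ω
      rw [hXconst, condExp_const (ℱ.le i)] at h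
      have hne : (MeasureTheory.ae μ).NeBot := ae_neBot.2 (IsProbabilityMeasure.ne_zero μ)
      obtain ⟨ω, hω⟩ := h.exists
      have hω' : (1 + c i) * X i ω ≤ x₀ := hω
      rw [hconst i hi ω] at hω'
      have : c i * x₀ ≤ 0 := by linarith
      have := hc i
      nlinarith
    have hempty : {ω | ∃ n, N ≤ n ∧ X n ω ≤ M * ∏ i ∈ Finset.Ico N n, (1 + c i)} = ∅ := by
      ext ω
      simp only [Set.mem_setOf_eq, Set.mem_empty_iff_false, iff_false, not_exists]
      rintro n ⟨hn, hle⟩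
      have hP : ∏ i ∈ Finset.Ico N n, (1 + c i) = 1 := by
        apply Finset.prod_eq_one
        intro i hi
        rw [hczero i (Finset.mem_Ico.1 hi).1]
        norm_num
      rw [hP, mul_one] at hle
      have := hconst n hn ω
      nlinarith [sq_nonneg C, hC]
    rw [hempty, measure_empty]
    exact zero_le'
  · exact me4_main μ ℱ X N C hC c hc hadapt hint hrec hinc x₀ M hstart hx₀ hM hC1 hM0 hXmono
end

section
/- For δ > 0, as n → ∞, the triple sum ∑_{1 ≤ r < s < t ≤ n} r^{−2/(2+δ)} s^{−1} t^{−(2+2δ)/(2+δ)} equals ((2+δ)/δ)² log n + O(1). -/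
open Finset

section Helpers

variable {β : ℝ}

/-- Bernoulli upper step: `(x+1)^β ≤ x^β + β * x^(β-1)` for `x ≥ 1`. -/
lemma bern_up (h0 : 0 ≤ β) (h1 : β ≤ 1) {x : ℝ} (hx : 1 ≤ x) :
    (x + 1) ^ β ≤ x ^ β + β * x ^ (β - 1) := by
  have hx0 : (0:ℝ) < x := lt_of_lt_of_le one_pos hx
  have hpos : (0:ℝ) ≤ 1 / x := by positivity
  have hs : (-1:ℝ) ≤ 1 / x := by linarith
  have h := rpow_one_add_le_one_add_mul_self hs h0 h1
  have key : x + 1 = x * (1 + 1 / x) := by field_simp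
  calc (x + 1) ^ β = x ^ β * (1 + 1 / x) ^ β := by
        rw [key, Real.mul_rpow hx0.le (by positivity)]
    _ ≤ x ^ β * (1 + β * (1 / x)) :=
        mul_le_mul_of_nonneg_left h (Real.rpow_nonneg hx0.le β)
    _ = x ^ β + β * (x ^ β / x) := by ring
    _ = x ^ β + β * x ^ (β - 1) := by rw [Real.rpow_sub hx0, Real.rpow_one]

/-- Bernoulli lower step: `x^β ≤ (x+1)^β - β * (x+1)^(β-1)` for `x ≥ 0`. -/
lemma bern_low (h0 : 0 ≤ β) (h1 : β ≤ 1) {x : ℝ} (hx : 0 ≤ x) :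
    x ^ β ≤ (x + 1) ^ β - β * (x + 1) ^ (β - 1) := by
  have hx1 : (0:ℝ) < x + 1 := by linarith
  have hle1 : 1 / (x + 1) ≤ 1 := by rw [div_le_one hx1]; linarith
  have hs : (-1:ℝ) ≤ -(1 / (x + 1)) := by linarith
  have h := rpow_one_add_le_one_add_mul_self hs h0 h1
  have hnn : (0:ℝ) ≤ 1 + -(1 / (x + 1)) := by linarith
  have key : x = (x + 1) * (1 + -(1 / (x + 1))) := by field_simp; ring
  calc x ^ β = (x + 1) ^ β * (1 + -(1 / (x + 1))) ^ β := by
        rw [← Real.mul_rpow hx1.le hnn, ← key]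
    _ ≤ (x + 1) ^ β * (1 + β * -(1 / (x + 1))) :=
        mul_le_mul_of_nonneg_left h (Real.rpow_nonneg hx1.le β)
    _ = (x + 1) ^ β - β * ((x + 1) ^ β / (x + 1)) := by ring
    _ = (x + 1) ^ β - β * (x + 1) ^ (β - 1) := by rw [Real.rpow_sub hx1, Real.rpow_one]

lemma F_low (h0 : 0 < β) (h1 : β < 1) (s : ℕ) :
    (s : ℝ) ^ β - 1 ≤ β * ∑ r ∈ Ico 1 s, (r : ℝ) ^ (β - 1) := by
  induction s with
  | zero => norm_num [Real.zero_rpow h0.ne']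
  | succ s ih =>
    rcases Nat.eq_zero_or_pos s with rfl | hs
    · norm_num
    · rw [Finset.sum_Ico_succ_top hs, mul_add]
      have hb := bern_up h0.le h1.le (show (1:ℝ) ≤ (s:ℝ) by exact_mod_cast hs)
      push_cast
      linarith

lemma F_up (h0 : 0 < β) (h1 : β < 1) (s : ℕ) :
    β * ∑ r ∈ Ico 1 s, (r : ℝ) ^ (β - 1) ≤ (s : ℝ) ^ β := by
  have aux : ∀ m : ℕ, β * ∑ r ∈ Ico 1 (m + 1), (r : ℝ) ^ (β - 1) ≤ (m : ℝ) ^ β := by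
    intro m
    induction m with
    | zero => norm_num [Real.zero_rpow h0.ne']
    | succ m ih =>
      rw [Finset.sum_Ico_succ_top (Nat.le_add_left 1 m), mul_add]
      have hb := bern_low h0.le h1.le (show (0:ℝ) ≤ (m:ℝ) from Nat.cast_nonneg m)
      push_cast
      linarith
  have mono : ∑ r ∈ Ico 1 s, (r : ℝ) ^ (β - 1) ≤ ∑ r ∈ Ico 1 (s + 1), (r : ℝ) ^ (β - 1) :=
    Finset.sum_le_sum_of_subset_of_nonneg
      (Finset.Ico_subset_Ico_right (Nat.le_succ s))
      (fun i _ _ => Real.rpow_nonneg (Nat.cast_nonneg i) _)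
  have h1' : (s : ℝ) ^ β ≤ ((s : ℝ)) ^ β := le_refl _
  calc β * ∑ r ∈ Ico 1 s, (r : ℝ) ^ (β - 1)
      ≤ β * ∑ r ∈ Ico 1 (s + 1), (r : ℝ) ^ (β - 1) :=
        mul_le_mul_of_nonneg_left mono h0.le
    _ ≤ (s : ℝ) ^ β := aux s

lemma harmonic_up : ∀ n : ℕ, ∑ s ∈ Icc 1 n, (s : ℝ)⁻¹ ≤ 1 + Real.log n := by
  intro n
  induction n with
  | zero => norm_num
  | succ n ih =>
    rw [Finset.sum_Icc_succ_top (Nat.le_add_left 1 n)]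
    rcases Nat.eq_zero_or_pos n with rfl | hn
    · norm_num
    · have hnR : (0:ℝ) < n := by exact_mod_cast hn
      have hlog : ((n:ℝ) + 1)⁻¹ ≤ Real.log (n + 1) - Real.log n := by
        have h := Real.log_le_sub_one_of_pos (show (0:ℝ) < (n:ℝ) / ((n:ℝ)+1) by positivity)
        rw [Real.log_div hnR.ne' (by positivity)] at h
        have e : (n:ℝ) / ((n:ℝ)+1) - 1 = -((n:ℝ)+1)⁻¹ := by field_simp; ring
        rw [e] at h
        linarith
      push_cast
      linarith

lemma log_sum_up (t : ℕ) : ∑ s ∈ Ico 1 t, (s : ℝ)⁻¹ ≤ 1 + Real.log t := by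
  have mono : ∑ s ∈ Ico 1 t, (s : ℝ)⁻¹ ≤ ∑ s ∈ Icc 1 t, (s : ℝ)⁻¹ :=
    Finset.sum_le_sum_of_subset_of_nonneg Finset.Ico_subset_Icc_self
      (fun i _ _ => by positivity)
  exact mono.trans (harmonic_up t)

lemma harmonic_low (n : ℕ) : Real.log n ≤ ∑ t ∈ Icc 1 n, (t : ℝ)⁻¹ := by
  have aux : ∀ m : ℕ, Real.log (m + 1) ≤ ∑ t ∈ Icc 1 m, (t : ℝ)⁻¹ := by
    intro m
    induction m with
    | zero => norm_num
    | succ m ih =>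
      rw [Finset.sum_Icc_succ_top (Nat.le_add_left 1 m)]
      have hp : (0:ℝ) < (m:ℝ) + 1 := by positivity
      have hlog : Real.log (m + 1 + 1) - Real.log (m + 1) ≤ ((m:ℝ) + 1)⁻¹ := by
        have h := Real.log_le_sub_one_of_pos (show (0:ℝ) < ((m:ℝ)+1+1) / ((m:ℝ)+1) by positivity)
        rw [Real.log_div (by positivity) hp.ne'] at h
        have e : ((m:ℝ)+1+1) / ((m:ℝ)+1) - 1 = ((m:ℝ)+1)⁻¹ := by field_simp; ring
        rw [e] at h
        linarith
      push_cast at ih ⊢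
      linarith
  rcases Nat.eq_zero_or_pos n with rfl | hn
  · norm_num
  · have h1 : Real.log n ≤ Real.log (n + 1) := by
      apply Real.log_le_log (by exact_mod_cast hn)
      push_cast; linarith
    exact h1.trans (by have := aux n; push_cast at this ⊢; linarith)

lemma log_le_rpow_div {x ε : ℝ} (hx : 1 ≤ x) (hε : 0 < ε) : Real.log x ≤ x ^ ε / ε := by
  have hx0 : (0:ℝ) < x := lt_of_lt_of_le one_pos hx
  have h1 : Real.log (x ^ ε) ≤ x ^ ε - 1 := Real.log_le_sub_one_of_pos (Real.rpow_pos_of_pos hx0 ε)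
  rw [Real.log_rpow hx0] at h1
  rw [le_div_iff₀ hε]
  nlinarith

end Helpers

noncomputable def Fsum (β : ℝ) (s : ℕ) : ℝ := ∑ r ∈ Ico 1 s, (r : ℝ) ^ (β - 1)

noncomputable def Gsum (β : ℝ) (t : ℕ) : ℝ := ∑ s ∈ Ico 1 t, (s : ℝ)⁻¹ * Fsum β s

lemma Fsum_abs {β : ℝ} (h0 : 0 < β) (h1 : β < 1) (s : ℕ) :
    |Fsum β s - β⁻¹ * (s : ℝ) ^ β| ≤ β⁻¹ := by
  have hβinv : (0:ℝ) < β⁻¹ := inv_pos.mpr h0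
  have hl := F_low h0 h1 s
  have hu := F_up h0 h1 s
  have e : Fsum β s - β⁻¹ * (s : ℝ) ^ β = β⁻¹ * (β * Fsum β s - (s : ℝ) ^ β) := by
    field_simp [Fsum]
  rw [e, abs_mul, abs_of_pos hβinv]
  have habs : |β * Fsum β s - (s : ℝ) ^ β| ≤ 1 := by
    rw [abs_le]; unfold Fsum; constructor <;> linarith
  calc β⁻¹ * |β * Fsum β s - (s : ℝ) ^ β| ≤ β⁻¹ * 1 :=
        mul_le_mul_of_nonneg_left habs hβinv.le
    _ = β⁻¹ := mul_one _

lemma Gsum_abs {β : ℝ} (h0 : 0 < β) (h1 : β < 1) (t : ℕ) :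
    |Gsum β t - β⁻¹ ^ 2 * (t : ℝ) ^ β| ≤ β⁻¹ * (β⁻¹ + 1 + Real.log t) := by
  have hβinv : (0:ℝ) < β⁻¹ := inv_pos.mpr h0
  have split : Gsum β t
      = (∑ s ∈ Ico 1 t, (s : ℝ)⁻¹ * (Fsum β s - β⁻¹ * (s : ℝ) ^ β)) + β⁻¹ * Fsum β t := by
    have per : ∀ s ∈ Ico 1 t, (s : ℝ)⁻¹ * Fsum β s
        = (s : ℝ)⁻¹ * (Fsum β s - β⁻¹ * (s : ℝ) ^ β) + β⁻¹ * (s : ℝ) ^ (β - 1) := by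
      intro s hs
      have hs1 : (1:ℕ) ≤ s := (Finset.mem_Ico.mp hs).1
      have hsp : (0:ℝ) < s := by exact_mod_cast hs1
      rw [Real.rpow_sub hsp, Real.rpow_one]
      ring
    calc Gsum β t = ∑ s ∈ Ico 1 t,
          ((s : ℝ)⁻¹ * (Fsum β s - β⁻¹ * (s : ℝ) ^ β) + β⁻¹ * (s : ℝ) ^ (β - 1)) :=
          Finset.sum_congr rfl per
      _ = _ := by rw [Finset.sum_add_distrib, ← Finset.mul_sum]; rfl
  have e : Gsum β t - β⁻¹ ^ 2 * (t : ℝ) ^ β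
      = (∑ s ∈ Ico 1 t, (s : ℝ)⁻¹ * (Fsum β s - β⁻¹ * (s : ℝ) ^ β))
        + β⁻¹ * (Fsum β t - β⁻¹ * (t : ℝ) ^ β) := by
    rw [split]; ring
  have hsum : |∑ s ∈ Ico 1 t, (s : ℝ)⁻¹ * (Fsum β s - β⁻¹ * (s : ℝ) ^ β)|
      ≤ β⁻¹ * (1 + Real.log t) := by
    calc |∑ s ∈ Ico 1 t, (s : ℝ)⁻¹ * (Fsum β s - β⁻¹ * (s : ℝ) ^ β)|
        ≤ ∑ s ∈ Ico 1 t, (s : ℝ)⁻¹ * β⁻¹ := by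
          refine (Finset.abs_sum_le_sum_abs _ _).trans (Finset.sum_le_sum fun s hs => ?_)
          rw [abs_mul, abs_of_nonneg (show (0:ℝ) ≤ (s:ℝ)⁻¹ by positivity)]
          exact mul_le_mul_of_nonneg_left (Fsum_abs h0 h1 s) (by positivity)
      _ = β⁻¹ * ∑ s ∈ Ico 1 t, (s : ℝ)⁻¹ := by rw [← Finset.sum_mul, mul_comm]
      _ ≤ β⁻¹ * (1 + Real.log t) :=
          mul_le_mul_of_nonneg_left (log_sum_up t) hβinv.le
  have hsecond : |β⁻¹ * (Fsum β t - β⁻¹ * (t : ℝ) ^ β)| ≤ β⁻¹ * β⁻¹ := by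
    rw [abs_mul, abs_of_pos hβinv]
    exact mul_le_mul_of_nonneg_left (Fsum_abs h0 h1 t) hβinv.le
  calc |Gsum β t - β⁻¹ ^ 2 * (t : ℝ) ^ β|
      ≤ |∑ s ∈ Ico 1 t, (s : ℝ)⁻¹ * (Fsum β s - β⁻¹ * (s : ℝ) ^ β)|
        + |β⁻¹ * (Fsum β t - β⁻¹ * (t : ℝ) ^ β)| := by rw [e]; exact abs_add_le _ _
    _ ≤ β⁻¹ * (1 + Real.log t) + β⁻¹ * β⁻¹ := add_le_add hsum hsecond
    _ = β⁻¹ * (β⁻¹ + 1 + Real.log t) := by ring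

lemma key_lemma {β : ℝ} (h0 : 0 < β) (h1 : β < 1) :
    ∃ C : ℝ, ∀ n : ℕ, 2 ≤ n →
      |(∑ t ∈ Finset.Icc 1 n, ∑ s ∈ Finset.Ico 1 t, ∑ r ∈ Finset.Ico 1 s,
          (r : ℝ) ^ (β - 1) * (s : ℝ)⁻¹ * (t : ℝ) ^ (-1 - β))
        - (β⁻¹) ^ 2 * Real.log n| ≤ C := by
  have hβinv : (0:ℝ) < β⁻¹ := inv_pos.mpr h0
  have hsum1 : Summable (fun k : ℕ => (k : ℝ) ^ (-1 - β)) :=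
    Real.summable_nat_rpow.mpr (by linarith)
  have hsum2 : Summable (fun k : ℕ => (k : ℝ) ^ (-1 - β / 2)) :=
    Real.summable_nat_rpow.mpr (by linarith)
  set T1 : ℝ := ∑' k : ℕ, (k : ℝ) ^ (-1 - β) with hT1
  set T2 : ℝ := ∑' k : ℕ, (k : ℝ) ^ (-1 - β / 2) with hT2
  refine ⟨(β⁻¹ * (β⁻¹ + 1)) * T1 + (2 * β⁻¹ ^ 2) * T2 + β⁻¹ ^ 2, fun n hn => ?_⟩
  have hn1 : 1 ≤ n := le_trans one_le_two hn
  -- rearrange the triple sum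
  have hS : (∑ t ∈ Finset.Icc 1 n, ∑ s ∈ Finset.Ico 1 t, ∑ r ∈ Finset.Ico 1 s,
        (r : ℝ) ^ (β - 1) * (s : ℝ)⁻¹ * (t : ℝ) ^ (-1 - β))
      = ∑ t ∈ Finset.Icc 1 n, Gsum β t * (t : ℝ) ^ (-1 - β) := by
    refine Finset.sum_congr rfl fun t _ => ?_
    unfold Gsum Fsum
    rw [Finset.sum_mul]
    refine Finset.sum_congr rfl fun s _ => ?_
    rw [← Finset.sum_mul, ← Finset.sum_mul,
      mul_comm (∑ r ∈ Ico 1 s, (r : ℝ) ^ (β - 1)) ((s : ℝ)⁻¹)]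
  -- per-term bound
  have hterm : ∀ t ∈ Finset.Icc 1 n,
      |Gsum β t * (t : ℝ) ^ (-1 - β) - β⁻¹ ^ 2 * (t : ℝ)⁻¹|
      ≤ β⁻¹ * (β⁻¹ + 1) * (t : ℝ) ^ (-1 - β) + 2 * β⁻¹ ^ 2 * (t : ℝ) ^ (-1 - β / 2) := by
    intro t ht
    have ht1 : (1:ℕ) ≤ t := (Finset.mem_Icc.mp ht).1
    have htp : (0:ℝ) < t := by exact_mod_cast ht1
    have ht1R : (1:ℝ) ≤ t := by exact_mod_cast ht1
    have hpow : (t : ℝ) ^ β * (t : ℝ) ^ (-1 - β) = (t : ℝ)⁻¹ := by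
      rw [← Real.rpow_add htp]
      norm_num [Real.rpow_neg_one]
    have e : Gsum β t * (t : ℝ) ^ (-1 - β) - β⁻¹ ^ 2 * (t : ℝ)⁻¹
        = (Gsum β t - β⁻¹ ^ 2 * (t : ℝ) ^ β) * (t : ℝ) ^ (-1 - β) := by
      rw [← hpow]; ring
    have hlog : Real.log t ≤ 2 * β⁻¹ * (t : ℝ) ^ (β / 2) := by
      have h := log_le_rpow_div ht1R (by positivity : (0:ℝ) < β / 2)
      calc Real.log t ≤ (t : ℝ) ^ (β / 2) / (β / 2) := h
        _ = 2 * β⁻¹ * (t : ℝ) ^ (β / 2) := by field_simp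
    have hmul : (t : ℝ) ^ (β / 2) * (t : ℝ) ^ (-1 - β) = (t : ℝ) ^ (-1 - β / 2) := by
      rw [← Real.rpow_add htp]
      ring_nf
    rw [e, abs_mul, abs_of_nonneg (Real.rpow_nonneg htp.le _)]
    calc |Gsum β t - β⁻¹ ^ 2 * (t : ℝ) ^ β| * (t : ℝ) ^ (-1 - β)
        ≤ (β⁻¹ * (β⁻¹ + 1 + Real.log t)) * (t : ℝ) ^ (-1 - β) :=
          mul_le_mul_of_nonneg_right (Gsum_abs h0 h1 t) (Real.rpow_nonneg htp.le _)
      _ ≤ (β⁻¹ * (β⁻¹ + 1) + 2 * β⁻¹ ^ 2 * (t : ℝ) ^ (β / 2)) * (t : ℝ) ^ (-1 - β) := by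
          refine mul_le_mul_of_nonneg_right ?_ (Real.rpow_nonneg htp.le _)
          have h2 : β⁻¹ * Real.log t ≤ β⁻¹ * (2 * β⁻¹ * (t : ℝ) ^ (β / 2)) :=
            mul_le_mul_of_nonneg_left hlog hβinv.le
          nlinarith [h2]
      _ = β⁻¹ * (β⁻¹ + 1) * (t : ℝ) ^ (-1 - β)
          + 2 * β⁻¹ ^ 2 * ((t : ℝ) ^ (β / 2) * (t : ℝ) ^ (-1 - β)) := by ring
      _ = _ := by rw [hmul]
  -- sum the bounds
  have hpart1 : ∑ t ∈ Finset.Icc 1 n, (t : ℝ) ^ (-1 - β) ≤ T1 :=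
    Summable.sum_le_tsum _ (fun i _ => Real.rpow_nonneg (Nat.cast_nonneg i) _) hsum1
  have hpart2 : ∑ t ∈ Finset.Icc 1 n, (t : ℝ) ^ (-1 - β / 2) ≤ T2 :=
    Summable.sum_le_tsum _ (fun i _ => Real.rpow_nonneg (Nat.cast_nonneg i) _) hsum2
  have hmain : |(∑ t ∈ Finset.Icc 1 n, Gsum β t * (t : ℝ) ^ (-1 - β))
      - β⁻¹ ^ 2 * ∑ t ∈ Finset.Icc 1 n, (t : ℝ)⁻¹|
      ≤ β⁻¹ * (β⁻¹ + 1) * T1 + 2 * β⁻¹ ^ 2 * T2 := by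
    rw [Finset.mul_sum, ← Finset.sum_sub_distrib]
    calc |∑ t ∈ Finset.Icc 1 n, (Gsum β t * (t : ℝ) ^ (-1 - β) - β⁻¹ ^ 2 * (t : ℝ)⁻¹)|
        ≤ ∑ t ∈ Finset.Icc 1 n, |Gsum β t * (t : ℝ) ^ (-1 - β) - β⁻¹ ^ 2 * (t : ℝ)⁻¹| :=
          Finset.abs_sum_le_sum_abs _ _
      _ ≤ ∑ t ∈ Finset.Icc 1 n,
          (β⁻¹ * (β⁻¹ + 1) * (t : ℝ) ^ (-1 - β) + 2 * β⁻¹ ^ 2 * (t : ℝ) ^ (-1 - β / 2)) :=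
          Finset.sum_le_sum hterm
      _ = β⁻¹ * (β⁻¹ + 1) * ∑ t ∈ Finset.Icc 1 n, (t : ℝ) ^ (-1 - β)
          + 2 * β⁻¹ ^ 2 * ∑ t ∈ Finset.Icc 1 n, (t : ℝ) ^ (-1 - β / 2) := by
          rw [Finset.sum_add_distrib, ← Finset.mul_sum, ← Finset.mul_sum]
      _ ≤ β⁻¹ * (β⁻¹ + 1) * T1 + 2 * β⁻¹ ^ 2 * T2 :=
          add_le_add (mul_le_mul_of_nonneg_left hpart1 (by positivity))
            (mul_le_mul_of_nonneg_left hpart2 (by positivity))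
  have hH : |(∑ t ∈ Finset.Icc 1 n, (t : ℝ)⁻¹) - Real.log n| ≤ 1 := by
    rw [abs_le]
    constructor
    · linarith [harmonic_low n]
    · linarith [harmonic_up n]
  rw [hS]
  have e2 : (∑ t ∈ Finset.Icc 1 n, Gsum β t * (t : ℝ) ^ (-1 - β)) - β⁻¹ ^ 2 * Real.log n
      = ((∑ t ∈ Finset.Icc 1 n, Gsum β t * (t : ℝ) ^ (-1 - β))
          - β⁻¹ ^ 2 * ∑ t ∈ Finset.Icc 1 n, (t : ℝ)⁻¹)
        + β⁻¹ ^ 2 * ((∑ t ∈ Finset.Icc 1 n, (t : ℝ)⁻¹) - Real.log n) := by ring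
  rw [e2]
  calc |_ + _| ≤ |(∑ t ∈ Finset.Icc 1 n, Gsum β t * (t : ℝ) ^ (-1 - β))
          - β⁻¹ ^ 2 * ∑ t ∈ Finset.Icc 1 n, (t : ℝ)⁻¹|
        + |β⁻¹ ^ 2 * ((∑ t ∈ Finset.Icc 1 n, (t : ℝ)⁻¹) - Real.log n)| := abs_add_le _ _
    _ ≤ (β⁻¹ * (β⁻¹ + 1) * T1 + 2 * β⁻¹ ^ 2 * T2) + β⁻¹ ^ 2 * 1 := by
        refine add_le_add hmain ?_
        rw [abs_mul, abs_of_nonneg (by positivity : (0:ℝ) ≤ β⁻¹ ^ 2)]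
        exact mul_le_mul_of_nonneg_left hH (by positivity)
    _ = β⁻¹ * (β⁻¹ + 1) * T1 + 2 * β⁻¹ ^ 2 * T2 + β⁻¹ ^ 2 := by ring

/-- The triple sum `∑_{1 ≤ r < s < t ≤ n} r^{-2/(2+δ)} s^{-1} t^{-(2+2δ)/(2+δ)}`
equals `((2+δ)/δ)² log n + O(1)`. -/
theorem triple_sum_log_asymptotics (δ : ℝ) (hδ : 0 < δ) :
    ∃ C : ℝ, ∀ n : ℕ, 2 ≤ n →
      |(∑ t ∈ Finset.Icc 1 n, ∑ s ∈ Finset.Ico 1 t, ∑ r ∈ Finset.Ico 1 s,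
          (r : ℝ) ^ (-(2 / (2 + δ))) * (s : ℝ)⁻¹ * (t : ℝ) ^ (-((2 + 2 * δ) / (2 + δ))))
        - ((2 + δ) / δ) ^ 2 * Real.log n| ≤ C := by
  have h2δ : (0:ℝ) < 2 + δ := by linarith
  have hβ0 : 0 < δ / (2 + δ) := by positivity
  have hβ1 : δ / (2 + δ) < 1 := by rw [div_lt_one h2δ]; linarith
  obtain ⟨C, hC⟩ := key_lemma hβ0 hβ1
  refine ⟨C, fun n hn => ?_⟩
  have e1 : -(2 / (2 + δ)) = δ / (2 + δ) - 1 := by field_simp; ring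
  have e2 : -((2 + 2 * δ) / (2 + δ)) = -1 - δ / (2 + δ) := by field_simp; ring
  have e3 : (2 + δ) / δ = (δ / (2 + δ))⁻¹ := (inv_div δ (2 + δ)).symm
  rw [e1, e2, e3]
  exact hC n hn
end

section
/- Let A₁, …, A_{n} be events each of probability at most c for some c ∈ (0,1), and let Z be a nonnegative random variable with E[exp(λZ)] ≤ exp(K) for some λ > 0, K ≥ 0. Then E[1_{A_i} Z] ≤ ∫₀^∞ min(c, exp(−λx + K)) dx ≤ c(K + 1 − log c)/λ for each i. -/
open MeasureTheory

/-- Key step of Lemma 2.7: for an event `A` with `P(A) ≤ c` and a nonnegative random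
variable `Z` with `E[exp(lam·Z)] ≤ exp K`, we have
`E[1_A Z] ≤ ∫₀^∞ min(c, exp(-lam·x + K)) dx ≤ c(K + 1 - log c)/lam`. -/
theorem truncated_integral_bound
    {Ω : Type*} [MeasurableSpace Ω] (μ : Measure Ω) [IsProbabilityMeasure μ]
    (A : Set Ω) (hA : MeasurableSet A) (c : ℝ) (hc0 : 0 < c) (hc1 : c < 1)
    (hAc : (μ A).toReal ≤ c)
    (Z : Ω → ℝ) (hZ : ∀ ω, 0 ≤ Z ω) (lam K : ℝ) (hlam : 0 < lam) (hK : 0 ≤ K)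
    (hZint : Integrable Z μ)
    (hexpint : Integrable (fun ω => Real.exp (lam * Z ω)) μ)
    (hmgf : ∫ ω, Real.exp (lam * Z ω) ∂μ ≤ Real.exp K) :
    (∫ ω in A, Z ω ∂μ) ≤ (∫ x in Set.Ioi (0 : ℝ), min c (Real.exp (-lam * x + K))) ∧
    (∫ x in Set.Ioi (0 : ℝ), min c (Real.exp (-lam * x + K)))
      ≤ c * (K + 1 - Real.log c) / lam := by
  have hlam' : lam ≠ 0 := ne_of_gt hlam
  set g : ℝ → ℝ := fun x => min c (Real.exp (-lam * x + K)) with hgdef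
  -- integrability of the exponential bound on any Ioi a
  have hexpInt : ∀ a : ℝ, IntegrableOn (fun x => Real.exp (-lam * x + K)) (Set.Ioi a) := by
    intro a
    have h := (exp_neg_integrableOn_Ioi a hlam).mul_const (Real.exp K)
    exact h.congr (Filter.Eventually.of_forall fun x => (Real.exp_add _ _).symm)
  have hgcont : Continuous g := by
    exact continuous_const.min (((continuous_const.mul continuous_id).add continuous_const).rexp)
  have hgnonneg : ∀ x, 0 ≤ g x := fun x => le_min hc0.le (Real.exp_pos _).le
  have hgInt : ∀ a : ℝ, IntegrableOn g (Set.Ioi a) := by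
    intro a
    refine Integrable.mono' (hexpInt a) hgcont.aestronglyMeasurable ?_
    refine Filter.Eventually.of_forall fun x => ?_
    rw [Real.norm_eq_abs, abs_of_nonneg (hgnonneg x)]
    exact min_le_right _ _
  constructor
  · -- layer cake + pointwise bound
    have key : ∫ ω in A, Z ω ∂μ
        = ∫ t in Set.Ioi (0 : ℝ), ((μ.restrict A) {ω | t < Z ω}).toReal :=
      (hZint.restrict).integral_eq_integral_meas_lt (Filter.Eventually.of_forall hZ)
    rw [key]
    refine integral_mono_of_nonneg (Filter.Eventually.of_forall fun t => ENNReal.toReal_nonneg)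
      (hgInt 0) ?_
    rw [Filter.EventuallyLE, ae_restrict_iff' measurableSet_Ioi]
    refine Filter.Eventually.of_forall fun t ht => ?_
    refine le_min ?_ ?_
    · -- bounded by measure of A
      have h1 : (μ.restrict A) {ω | t < Z ω} ≤ μ A := by
        calc (μ.restrict A) {ω | t < Z ω} ≤ (μ.restrict A) Set.univ :=
              measure_mono (Set.subset_univ _)
          _ = μ A := by simp
      exact le_trans (ENNReal.toReal_mono (measure_ne_top μ A) h1) hAc
    · -- Markov / Chernoff bound
      have h2 : (μ.restrict A) {ω | t < Z ω} ≤ μ {ω | t < Z ω} :=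
        Measure.restrict_le_self _
      have hsub : {ω | t < Z ω} ⊆ {ω | Real.exp (lam * t) ≤ Real.exp (lam * Z ω)} := by
        intro ω hω
        exact Real.exp_le_exp.2 (mul_le_mul_of_nonneg_left (le_of_lt hω) hlam.le)
      have hmar := mul_meas_ge_le_integral_of_nonneg
        (μ := μ) (f := fun ω => Real.exp (lam * Z ω))
        (Filter.Eventually.of_forall fun ω => (Real.exp_pos _).le) hexpint (Real.exp (lam * t))
      have hE : Real.exp (lam * t) * (μ {ω | Real.exp (lam * t) ≤ Real.exp (lam * Z ω)}).toReal
          ≤ Real.exp K := hmar.trans hmgf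
      have hm2 : (μ {ω | t < Z ω}).toReal
          ≤ (μ {ω | Real.exp (lam * t) ≤ Real.exp (lam * Z ω)}).toReal :=
        ENNReal.toReal_mono (measure_ne_top μ _) (measure_mono hsub)
      have hexp : (μ {ω | Real.exp (lam * t) ≤ Real.exp (lam * Z ω)}).toReal
          ≤ Real.exp (-lam * t + K) := by
        have hme : Real.exp (-lam * t + K) = Real.exp K / Real.exp (lam * t) := by
          rw [← Real.exp_sub]; ring_nf
        rw [hme, le_div_iff₀ (Real.exp_pos (lam * t)), mul_comm]
        exact hE
      calc ((μ.restrict A) {ω | t < Z ω}).toReal ≤ (μ {ω | t < Z ω}).toReal :=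
            ENNReal.toReal_mono (measure_ne_top μ _) h2
        _ ≤ _ := hm2.trans hexp
  · -- compute / bound the truncated integral
    set t0 : ℝ := (K - Real.log c) / lam with ht0def
    have hlogc : Real.log c < 0 := Real.log_neg hc0 hc1
    have ht0 : 0 < t0 := div_pos (by linarith) hlam
    have hsplit : ∫ x in Set.Ioi (0 : ℝ), g x
        = (∫ x in Set.Ioc 0 t0, g x) + ∫ x in Set.Ioi t0, g x := by
      rw [← setIntegral_union (Set.Ioc_disjoint_Ioi le_rfl) measurableSet_Ioi
        ((hgInt 0).mono_set Set.Ioc_subset_Ioi_self) (hgInt t0),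
        Set.Ioc_union_Ioi_eq_Ioi ht0.le]
    have h1 : (∫ x in Set.Ioc 0 t0, g x) ≤ c * t0 := by
      calc (∫ x in Set.Ioc 0 t0, g x) ≤ ∫ _x in Set.Ioc 0 t0, c :=
            setIntegral_mono_on ((hgInt 0).mono_set Set.Ioc_subset_Ioi_self)
              (integrableOn_const measure_Ioc_lt_top.ne)
              measurableSet_Ioc (fun x _ => min_le_left _ _)
        _ = c * t0 := by
            simp [Real.volume_Ioc, ENNReal.toReal_ofReal ht0.le, mul_comm, ht0.le]
    have hIoi : (∫ x in Set.Ioi t0, Real.exp (-lam * x + K)) = c / lam := by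
      have hderiv : ∀ x ∈ Set.Ioi t0,
          HasDerivAt (fun x => -Real.exp (-lam * x + K) / lam) (Real.exp (-lam * x + K)) x := by
        intro x _
        have h := (((hasDerivAt_id x).const_mul (-lam)).add_const K).exp.neg.div_const lam
        refine h.congr_deriv ?_
        simp only [id]
        rw [div_eq_iff hlam']
        ring
      have htend : Filter.Tendsto (fun x => -Real.exp (-lam * x + K) / lam)
          Filter.atTop (nhds 0) := by
        have h1 : Filter.Tendsto (fun x : ℝ => -lam * x + K) Filter.atTop Filter.atBot := by
          apply Filter.tendsto_atBot_add_const_right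
          exact Filter.Tendsto.const_mul_atTop_of_neg (by linarith) Filter.tendsto_id
        have := ((Real.tendsto_exp_atBot.comp h1).neg).div_const lam
        simpa using this
      have hcont : ContinuousWithinAt (fun x => -Real.exp (-lam * x + K) / lam)
          (Set.Ici t0) t0 := by
        exact ((((continuous_const.mul continuous_id).add
          continuous_const).rexp.neg.div_const lam).continuousAt).continuousWithinAt
      rw [MeasureTheory.integral_Ioi_of_hasDerivAt_of_tendsto hcont hderiv (hexpInt t0) htend]
      have ht0eq : -lam * t0 + K = Real.log c := by
        rw [ht0def]; field_simp; ring
      rw [ht0eq, Real.exp_log hc0]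
      ring
    have h2 : (∫ x in Set.Ioi t0, g x) ≤ c / lam := by
      rw [← hIoi]
      exact setIntegral_mono_on (hgInt t0) (hexpInt t0) measurableSet_Ioi
        (fun x _ => min_le_right _ _)
    have hfinal : c * t0 + c / lam = c * (K + 1 - Real.log c) / lam := by
      rw [ht0def]; field_simp; ring
    calc (∫ x in Set.Ioi (0 : ℝ), g x) = _ := hsplit
      _ ≤ c * t0 + c / lam := add_le_add h1 h2
      _ = _ := hfinal
end

section
/- Let (G_k)_{k≥1} be a sequence of nonnegative integer random variables adapted to a filtration such that G₁ is stochastically dominated by 1 + Binomial(n, p) and, conditioned on F_k, G_{k+1} − G_k is stochastically dominated by Binomial(n, p·G_k). Then for every j ≥ 1, E[exp((2pn+2)^{−(j−1)} G_j)] ≤ exp(2pn+1). -/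
open MeasureTheory Finset
open scoped Classical
noncomputable section

/-- Upper tail `P(Binomial(n,q) ≥ t)` of a binomial distribution. -/
def binomTail (n : ℕ) (q : ℝ) (t : ℕ) : ℝ :=
  ∑ k ∈ (Finset.range (n + 1)).filter (fun k => t ≤ k),
    (n.choose k : ℝ) * q ^ k * (1 - q) ^ (n - k)

lemma binomTail_zero {n t : ℕ} (q : ℝ) (ht : n < t) : binomTail n q t = 0 := by
  unfold binomTail
  rw [Finset.filter_false_of_mem, Finset.sum_empty]
  intro k hk
  simp only [Finset.mem_range] at hk
  omega

lemma layer_exp (θ : ℝ) {L x : ℕ} (hx : x ≤ L) :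
    Real.exp (θ * x) = 1 + ∑ t ∈ Finset.range L,
      (Real.exp (θ * (t + 1)) - Real.exp (θ * t)) * (if t + 1 ≤ x then (1 : ℝ) else 0) := by
  have : ∑ t ∈ Finset.range L,
      (Real.exp (θ * (t + 1)) - Real.exp (θ * t)) * (if t + 1 ≤ x then (1 : ℝ) else 0)
      = ∑ t ∈ Finset.range x, (Real.exp (θ * (t + 1)) - Real.exp (θ * t)) := by
    rw [← Finset.sum_subset (Finset.range_subset_range.2 hx)]
    · apply Finset.sum_congr rfl
      intro t ht
      simp only [Finset.mem_range] at ht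
      rw [if_pos (by omega), mul_one]
    · intro t _ ht
      simp only [Finset.mem_range, not_lt] at ht
      rw [if_neg (by omega), mul_zero]
  rw [this]
  have := Finset.sum_range_sub (fun t : ℕ => Real.exp (θ * t)) x
  simp only [Nat.cast_add, Nat.cast_one] at this
  rw [this]
  simp [Real.exp_zero]

lemma sum_delta_binomTail (n L : ℕ) (hL : n ≤ L) (q θ : ℝ) :
    1 + ∑ t ∈ Finset.range L, (Real.exp (θ * (t + 1)) - Real.exp (θ * t)) * binomTail n q (t + 1)
      = (1 - q + q * Real.exp θ) ^ n := by
  have hswap : ∑ t ∈ Finset.range L,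
      (Real.exp (θ * (t + 1)) - Real.exp (θ * t)) * binomTail n q (t + 1)
      = ∑ k ∈ Finset.range (n + 1), ((n.choose k : ℝ) * q ^ k * (1 - q) ^ (n - k)) *
          (Real.exp (θ * k) - 1) := by
    unfold binomTail
    simp_rw [Finset.mul_sum, Finset.sum_filter]
    rw [Finset.sum_comm]
    apply Finset.sum_congr rfl
    intro k hk
    simp only [Finset.mem_range] at hk
    have : ∑ t ∈ Finset.range L, (if t + 1 ≤ k then
        (Real.exp (θ * (t + 1)) - Real.exp (θ * t)) * ((n.choose k : ℝ) * q ^ k * (1 - q) ^ (n - k)) else 0)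
        = ∑ t ∈ Finset.range k, (Real.exp (θ * (t + 1)) - Real.exp (θ * t)) * ((n.choose k : ℝ) * q ^ k * (1 - q) ^ (n - k)) := by
      rw [← Finset.sum_subset (Finset.range_subset_range.2 (by omega : k ≤ L))]
      · exact Finset.sum_congr rfl fun t ht => if_pos (by have := Finset.mem_range.1 ht; omega)
      · intro t _ ht
        simp only [Finset.mem_range, not_lt] at ht
        exact if_neg (by omega)
    rw [this, ← Finset.sum_mul]
    have := Finset.sum_range_sub (fun t : ℕ => Real.exp (θ * t)) k
    simp only [Nat.cast_add, Nat.cast_one] at this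
    rw [this]
    simp [Real.exp_zero]
    ring
  rw [hswap]
  have hbin1 : ∑ k ∈ Finset.range (n + 1), ((n.choose k : ℝ) * q ^ k * (1 - q) ^ (n - k)) = 1 := by
    calc ∑ k ∈ Finset.range (n + 1), ((n.choose k : ℝ) * q ^ k * (1 - q) ^ (n - k))
        = ∑ k ∈ Finset.range (n + 1), q ^ k * (1 - q) ^ (n - k) * (n.choose k : ℝ) :=
          Finset.sum_congr rfl fun k _ => by ring
      _ = (q + (1 - q)) ^ n := (add_pow q (1 - q) n).symm
      _ = 1 := by norm_num
  have hexp : ∀ k : ℕ, Real.exp (θ * k) = (Real.exp θ) ^ k := fun k => by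
    rw [mul_comm, Real.exp_nat_mul]
  have hpow : (1 - q + q * Real.exp θ) ^ n = ∑ k ∈ Finset.range (n + 1),
      (q * Real.exp θ) ^ k * (1 - q) ^ (n - k) * (n.choose k : ℝ) := by
    rw [show (1 - q + q * Real.exp θ) = q * Real.exp θ + (1 - q) by ring, add_pow]
  rw [hpow]
  have hsplit : ∑ k ∈ Finset.range (n + 1),
      ((n.choose k : ℝ) * q ^ k * (1 - q) ^ (n - k)) * (Real.exp (θ * k) - 1)
      = (∑ k ∈ Finset.range (n + 1), (q * Real.exp θ) ^ k * (1 - q) ^ (n - k) * (n.choose k : ℝ))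
        - ∑ k ∈ Finset.range (n + 1), ((n.choose k : ℝ) * q ^ k * (1 - q) ^ (n - k)) := by
    rw [← Finset.sum_sub_distrib]
    apply Finset.sum_congr rfl
    intro k _
    rw [hexp k, mul_pow]
    ring
  rw [hsplit, hbin1]
  ring

lemma sum_delta_binomTail' (n L : ℕ) (hL : n + 1 ≤ L) (q θ : ℝ) :
    1 + ∑ t ∈ Finset.range L, (Real.exp (θ * (t + 1)) - Real.exp (θ * t)) * binomTail n q t
      = Real.exp θ * (1 - q + q * Real.exp θ) ^ n := by
  have hswap : ∑ t ∈ Finset.range L,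
      (Real.exp (θ * (t + 1)) - Real.exp (θ * t)) * binomTail n q t
      = ∑ k ∈ Finset.range (n + 1), ((n.choose k : ℝ) * q ^ k * (1 - q) ^ (n - k)) *
          (Real.exp (θ * (k + 1)) - 1) := by
    unfold binomTail
    simp_rw [Finset.mul_sum, Finset.sum_filter]
    rw [Finset.sum_comm]
    apply Finset.sum_congr rfl
    intro k hk
    simp only [Finset.mem_range] at hk
    have : ∑ t ∈ Finset.range L, (if t ≤ k then
        (Real.exp (θ * (t + 1)) - Real.exp (θ * t)) * ((n.choose k : ℝ) * q ^ k * (1 - q) ^ (n - k)) else 0)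
        = ∑ t ∈ Finset.range (k + 1), (Real.exp (θ * (t + 1)) - Real.exp (θ * t)) * ((n.choose k : ℝ) * q ^ k * (1 - q) ^ (n - k)) := by
      rw [← Finset.sum_subset (Finset.range_subset_range.2 (by omega : k + 1 ≤ L))]
      · exact Finset.sum_congr rfl fun t ht => if_pos (by
          have := Finset.mem_range.1 ht; omega)
      · intro t _ ht
        simp only [Finset.mem_range, not_lt] at ht
        exact if_neg (by omega)
    rw [this, ← Finset.sum_mul]
    have := Finset.sum_range_sub (fun t : ℕ => Real.exp (θ * t)) (k + 1)
    simp only [Nat.cast_add, Nat.cast_one] at this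
    rw [this]
    simp only [Nat.cast_zero, mul_zero, Real.exp_zero]
    ring
  rw [hswap]
  have hbin1 : ∑ k ∈ Finset.range (n + 1), ((n.choose k : ℝ) * q ^ k * (1 - q) ^ (n - k)) = 1 := by
    calc ∑ k ∈ Finset.range (n + 1), ((n.choose k : ℝ) * q ^ k * (1 - q) ^ (n - k))
        = ∑ k ∈ Finset.range (n + 1), q ^ k * (1 - q) ^ (n - k) * (n.choose k : ℝ) :=
          Finset.sum_congr rfl fun k _ => by ring
      _ = (q + (1 - q)) ^ n := (add_pow q (1 - q) n).symm
      _ = 1 := by norm_num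
  have hexp : ∀ k : ℕ, Real.exp (θ * k) = (Real.exp θ) ^ k := fun k => by
    rw [mul_comm, Real.exp_nat_mul]
  have hpow : (1 - q + q * Real.exp θ) ^ n = ∑ k ∈ Finset.range (n + 1),
      (q * Real.exp θ) ^ k * (1 - q) ^ (n - k) * (n.choose k : ℝ) := by
    rw [show (1 - q + q * Real.exp θ) = q * Real.exp θ + (1 - q) by ring, add_pow]
  rw [hpow, Finset.mul_sum]
  have hsplit : ∑ k ∈ Finset.range (n + 1),
      ((n.choose k : ℝ) * q ^ k * (1 - q) ^ (n - k)) * (Real.exp (θ * (k + 1)) - 1)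
      = (∑ k ∈ Finset.range (n + 1), Real.exp θ * ((q * Real.exp θ) ^ k * (1 - q) ^ (n - k) * (n.choose k : ℝ)))
        - ∑ k ∈ Finset.range (n + 1), ((n.choose k : ℝ) * q ^ k * (1 - q) ^ (n - k)) := by
    rw [← Finset.sum_sub_distrib]
    apply Finset.sum_congr rfl
    intro k _
    have : Real.exp (θ * (k + 1)) = (Real.exp θ) ^ k * Real.exp θ := by
      rw [show θ * ((k : ℝ) + 1) = θ * k + θ by ring, Real.exp_add, hexp k]
    rw [this, mul_pow]
    ring
  rw [hsplit, hbin1]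
  ring

lemma exp_le_one_add_two_mul {x : ℝ} (h0 : 0 ≤ x) (h1 : x ≤ 1 / 2) :
    Real.exp x ≤ 1 + 2 * x := by
  have h2 : 1 - x ≤ Real.exp (-x) := by linarith [Real.add_one_le_exp (-x)]
  have hpos : (0 : ℝ) < 1 - x := by linarith
  have hmul : Real.exp x * (1 - x) ≤ 1 := by
    have := mul_le_mul_of_nonneg_left h2 (Real.exp_pos x).le
    rwa [← Real.exp_add, add_neg_cancel, Real.exp_zero] at this
  have h3 : Real.exp x ≤ (1 - x)⁻¹ := by
    rw [inv_eq_one_div, le_div_iff₀ hpos]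
    linarith
  have h4 : (1 - x)⁻¹ ≤ 1 + 2 * x := by
    rw [inv_eq_one_div, div_le_iff₀ hpos]
    nlinarith
  linarith

/-- Lemma 2.2: if `G₁` is stochastically dominated by `1 + Binomial(n,p)` and,
conditioned on `ℱ k`, `G_{k+1} - G_k` is stochastically dominated by
`Binomial(n, p·G_k)`, then `E[exp((2pn+2)^{-(j-1)} G_j)] ≤ exp(2pn+1)` for all `j ≥ 1`. -/
theorem neighborhood_growth_exponential_moment
    {Ω : Type*} {m0 : MeasurableSpace Ω} (μ : Measure Ω) [IsProbabilityMeasure μ]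
    (ℱ : Filtration ℕ m0) (n : ℕ) (p : ℝ) (hp0 : 0 < p) (hp1 : p ≤ 1)
    (G : ℕ → Ω → ℕ)
    (hadapt : ∀ k, Measurable[ℱ k] (G k))
    (hmono : ∀ k ω, G k ω ≤ G (k + 1) ω)
    (hG1 : ∀ t : ℕ, (μ {ω | t + 1 ≤ G 1 ω}).toReal ≤ binomTail n p t)
    (hstep : ∀ k t : ℕ,
      μ[{ω | t ≤ G (k + 1) ω - G k ω}.indicator (fun _ => (1 : ℝ)) | ℱ k]
        ≤ᵐ[μ] fun ω => binomTail n (min 1 (p * (G k ω : ℝ))) t) :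
    ∀ j : ℕ, 1 ≤ j →
      ∫ ω, Real.exp (((2 * p * (n : ℝ) + 2) ^ (j - 1))⁻¹ * (G j ω : ℝ)) ∂μ
        ≤ Real.exp (2 * p * (n : ℝ) + 1) := by
  -- basic notations and facts
  set c : ℝ := 2 * p * (n : ℝ) + 2 with hc
  have hn0 : (0 : ℝ) ≤ (n : ℝ) := Nat.cast_nonneg n
  have hc2 : (2 : ℝ) ≤ c := by
    have : 0 ≤ 2 * p * (n : ℝ) := by positivity
    simp [hc]; linarith
  have hc0 : (0 : ℝ) < c := by linarith
  -- measurability of G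
  have hGm : ∀ k, Measurable (G k) := fun k => (hadapt k).mono (ℱ.le k) le_rfl
  have hGmR : ∀ k, Measurable (fun ω => (G k ω : ℝ)) := fun k =>
    measurable_from_top.comp (hGm k)
  have hsetm : ∀ (X : Ω → ℕ), Measurable X → ∀ t : ℕ, MeasurableSet {ω | t ≤ X ω} := by
    intro X hX t
    exact hX (by trivial)
  -- integrability of bounded exponentials
  have hIntX : ∀ (X : Ω → ℕ), Measurable X → ∀ (θ : ℝ) (C : ℕ), 0 ≤ θ →
      (∀ᵐ ω ∂μ, X ω ≤ C) → Integrable (fun ω => Real.exp (θ * (X ω : ℝ))) μ := by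
    intro X hX θ C hθ hC
    apply Integrable.mono' (integrable_const (Real.exp (θ * (C : ℝ))))
    · exact (Real.measurable_exp.comp
        (measurable_const.mul (measurable_from_top.comp hX))).aestronglyMeasurable
    · filter_upwards [hC] with ω hω
      rw [Real.norm_eq_abs, abs_of_pos (Real.exp_pos _)]
      exact Real.exp_le_exp.2 (mul_le_mul_of_nonneg_left (Nat.cast_le.2 hω) hθ)
  -- a.e. bound on G 1
  have hmeas_zero : ∀ (S : Set Ω), MeasurableSet S → (μ S).toReal ≤ 0 → μ S = 0 := by
    intro S _ h
    have h1 : (μ S).toReal = 0 := le_antisymm h ENNReal.toReal_nonneg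
    rcases (ENNReal.toReal_eq_zero_iff _).1 h1 with h2 | h2
    · exact h2
    · exact absurd h2 (measure_ne_top μ S)
  have hG1le : ∀ᵐ ω ∂μ, G 1 ω ≤ n + 1 := by
    have h := hG1 (n + 1)
    rw [binomTail_zero p (by omega)] at h
    have h0 : μ {ω | n + 1 + 1 ≤ G 1 ω} = 0 :=
      hmeas_zero _ (hsetm _ (hGm 1) (n + 2)) h
    rw [ae_iff]
    convert h0 using 2
    ext ω
    simp only [Set.mem_setOf_eq, not_le]
    omega
  -- a.e. bound on increments
  have hDle : ∀ k, ∀ᵐ ω ∂μ, G (k + 1) ω - G k ω ≤ n := by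
    intro k
    have hA : MeasurableSet {ω | n + 1 ≤ G (k + 1) ω - G k ω} :=
      hsetm _ ((hGm (k + 1)).sub (hGm k)) (n + 1)
    have hint : Integrable ({ω | n + 1 ≤ G (k + 1) ω - G k ω}.indicator
        (fun _ => (1 : ℝ))) μ := (integrable_const (1 : ℝ)).indicator hA
    have h0 : μ[{ω | n + 1 ≤ G (k + 1) ω - G k ω}.indicator (fun _ => (1 : ℝ)) | ℱ k]
        ≤ᵐ[μ] (fun _ => (0 : ℝ)) := by
      filter_upwards [hstep k (n + 1)] with ω hω
      rwa [binomTail_zero _ (by omega)] at hω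
    have h1 : (μ {ω | n + 1 ≤ G (k + 1) ω - G k ω}).toReal ≤ 0 := by
      rw [← Measure.real_def, ← integral_indicator_one hA, ← integral_condExp (ℱ.le k)]
      exact integral_nonpos_of_ae h0
    have h2 := hmeas_zero _ hA h1
    rw [ae_iff]
    convert h2 using 2
    ext ω
    simp only [Set.mem_setOf_eq, not_le]
    omega
  -- a.e. boundedness of each G (j+1)
  have hbdd : ∀ j, ∃ C : ℕ, ∀ᵐ ω ∂μ, G (j + 1) ω ≤ C := by
    intro j
    induction j with
    | zero => exact ⟨n + 1, hG1le⟩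
    | succ j ih =>
      obtain ⟨C, hC⟩ := ih
      refine ⟨C + n, ?_⟩
      filter_upwards [hC, hDle (j + 1)] with ω h1 h2
      have := hmono (j + 1) ω
      omega
  -- conditional MGF bound
  have hcond : ∀ (k : ℕ) (θ : ℝ), 0 ≤ θ →
      μ[fun ω => Real.exp (θ * ((G (k + 1) ω - G k ω : ℕ) : ℝ)) | ℱ k]
        ≤ᵐ[μ] fun ω =>
          (1 - min 1 (p * (G k ω : ℝ)) + min 1 (p * (G k ω : ℝ)) * Real.exp θ) ^ n := by
    intro k θ hθ
    set Δ : ℕ → ℝ := fun t => Real.exp (θ * (t + 1)) - Real.exp (θ * t) with hΔdef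
    have hΔ0 : ∀ t : ℕ, 0 ≤ Δ t := by
      intro t
      have : θ * (t : ℝ) ≤ θ * ((t : ℝ) + 1) := by nlinarith
      simp only [hΔdef, sub_nonneg]
      exact Real.exp_le_exp.2 this
    set g : ℕ → Ω → ℝ := fun t =>
      {ω | t + 1 ≤ G (k + 1) ω - G k ω}.indicator (fun _ => (1 : ℝ)) with hgdef
    have hgint : ∀ t, Integrable (g t) μ := fun t =>
      (integrable_const (1 : ℝ)).indicator (hsetm _ ((hGm (k + 1)).sub (hGm k)) (t + 1))
    have hterm_int : ∀ t, Integrable (Δ t • g t) μ := fun t => (hgint t).smul (Δ t)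
    set S : Ω → ℝ := ∑ t ∈ Finset.range (n + 1), Δ t • g t with hSdef
    have hsum_int : Integrable S μ := by
      have h := integrable_finset_sum (μ := μ) (f := fun t => Δ t • g t)
        (Finset.range (n + 1)) (fun t _ => hterm_int t)
      exact h.congr (Filter.Eventually.of_forall (fun ω => by simp [hSdef, Finset.sum_apply]))
    have hBF : (fun ω => Real.exp (θ * ((G (k + 1) ω - G k ω : ℕ) : ℝ)))
        =ᵐ[μ] (fun _ => (1 : ℝ)) + S := by
      filter_upwards [hDle k] with ω hω
      rw [layer_exp θ (show G (k + 1) ω - G k ω ≤ n + 1 by omega)]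
      simp only [Pi.add_apply, hSdef, Finset.sum_apply, Pi.smul_apply, smul_eq_mul,
        hgdef, Set.indicator_apply, Set.mem_setOf_eq, hΔdef]
    have e1 := condExp_congr_ae (m := ℱ k) (μ := μ) hBF
    have e2 := condExp_add (m := ℱ k) (μ := μ) (integrable_const (1 : ℝ)) hsum_int
    have econst := condExp_const (ℱ.le k) (1 : ℝ) (μ := μ)
    have e3 := condExp_finset_sum (s := Finset.range (n + 1)) (f := fun t => Δ t • g t)
      (fun t _ => hterm_int t) (m := ℱ k) (μ := μ)
    have e4 : ∀ t : ℕ, μ[Δ t • g t | ℱ k] =ᵐ[μ] Δ t • μ[g t | ℱ k] := fun t =>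
      condExp_smul (Δ t) (g t) _
    have htails : ∀ᵐ ω ∂μ, ∀ t : ℕ,
        (μ[g t | ℱ k]) ω ≤ binomTail n (min 1 (p * (G k ω : ℝ))) (t + 1) :=
      ae_all_iff.2 (fun t => hstep k (t + 1))
    filter_upwards [e1, e2, e3, ae_all_iff.2 e4, htails] with ω h1 h2 h3 h4 ht
    have hval : (μ[fun ω => Real.exp (θ * ((G (k + 1) ω - G k ω : ℕ) : ℝ)) | ℱ k]) ω
        = 1 + ∑ t ∈ Finset.range (n + 1), Δ t * (μ[g t | ℱ k]) ω := by
      rw [h1, h2, Pi.add_apply, econst, h3, Finset.sum_apply]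
      congr 1
      apply Finset.sum_congr rfl
      intro t _
      rw [h4 t, Pi.smul_apply, smul_eq_mul]
    rw [hval, ← sum_delta_binomTail n (n + 1) (by omega) (min 1 (p * (G k ω : ℝ))) θ]
    apply add_le_add_right
    apply Finset.sum_le_sum
    intro t _
    exact mul_le_mul_of_nonneg_left (ht t) (hΔ0 t)
  -- conditional exponential bound
  have hcond2 : ∀ (k : ℕ) (θ : ℝ), 0 ≤ θ → θ ≤ 1 / 2 →
      μ[fun ω => Real.exp (θ * ((G (k + 1) ω - G k ω : ℕ) : ℝ)) | ℱ k]
        ≤ᵐ[μ] fun ω => Real.exp (2 * θ * p * (n : ℝ) * (G k ω : ℝ)) := by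
    intro k θ hθ0 hθh
    filter_upwards [hcond k θ hθ0] with ω hω
    refine hω.trans ?_
    set q : ℝ := min 1 (p * (G k ω : ℝ)) with hq
    have hq0 : 0 ≤ q := le_min one_pos.le (by positivity)
    have hqle : q ≤ p * (G k ω : ℝ) := min_le_right _ _
    have he1 : (1 : ℝ) ≤ Real.exp θ := by
      rw [← Real.exp_zero]; exact Real.exp_le_exp.2 hθ0
    have hbase : 1 - q + q * Real.exp θ ≤ Real.exp (q * (Real.exp θ - 1)) := by
      have := Real.add_one_le_exp (q * (Real.exp θ - 1))
      linarith
    have hbase0 : (0 : ℝ) ≤ 1 - q + q * Real.exp θ := by nlinarith [min_le_left (1:ℝ) (p * (G k ω : ℝ))]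
    calc (1 - q + q * Real.exp θ) ^ n ≤ (Real.exp (q * (Real.exp θ - 1))) ^ n :=
          pow_le_pow_left₀ hbase0 hbase n
      _ = Real.exp ((n : ℝ) * (q * (Real.exp θ - 1))) := by rw [Real.exp_nat_mul]
      _ ≤ Real.exp (2 * θ * p * (n : ℝ) * (G k ω : ℝ)) := by
          apply Real.exp_le_exp.2
          have hexpb : Real.exp θ - 1 ≤ 2 * θ := by
            have := exp_le_one_add_two_mul hθ0 hθh
            linarith
          have hG0 : (0 : ℝ) ≤ (G k ω : ℝ) := Nat.cast_nonneg _
          nlinarith [mul_le_mul_of_nonneg_left hexpb hq0,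
            mul_le_mul_of_nonneg_right hqle (by linarith : (0:ℝ) ≤ 2 * θ)]
  -- main induction
  intro j hj
  induction j, hj using Nat.le_induction with
  | base =>
    simp only [Nat.sub_self, pow_zero, inv_one]
    set Δ1 : ℕ → ℝ := fun t => Real.exp (1 * (t + 1)) - Real.exp (1 * t) with hΔ1
    have hΔ10 : ∀ t : ℕ, 0 ≤ Δ1 t := by
      intro t
      simp only [hΔ1, sub_nonneg]
      apply Real.exp_le_exp.2
      push_cast
      linarith
    set g1 : ℕ → Ω → ℝ := fun t =>
      {ω | t + 1 ≤ G 1 ω}.indicator (fun _ => (1 : ℝ)) with hg1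
    have hg1int : ∀ t, Integrable (g1 t) μ := fun t =>
      (integrable_const (1 : ℝ)).indicator (hsetm _ (hGm 1) (t + 1))
    have hae : (fun ω => Real.exp (1 * (G 1 ω : ℝ)))
        =ᵐ[μ] fun ω => 1 + ∑ t ∈ Finset.range (n + 2), Δ1 t * g1 t ω := by
      filter_upwards [hG1le] with ω hω
      rw [layer_exp 1 (show G 1 ω ≤ n + 2 by omega)]
      simp only [hΔ1, hg1, Set.indicator_apply, Set.mem_setOf_eq]
    have hLint : Integrable (fun ω => Real.exp (1 * (G 1 ω : ℝ))) μ :=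
      hIntX (G 1) (hGm 1) 1 (n + 1) zero_le_one hG1le
    have hRint : Integrable (fun ω => 1 + ∑ t ∈ Finset.range (n + 2), Δ1 t * g1 t ω) μ := by
      apply Integrable.add (integrable_const 1)
      apply integrable_finset_sum
      intro t _
      exact (hg1int t).const_mul (Δ1 t)
    have hIval : ∫ ω, Real.exp (1 * (G 1 ω : ℝ)) ∂μ
        = 1 + ∑ t ∈ Finset.range (n + 2), Δ1 t * (μ {ω | t + 1 ≤ G 1 ω}).toReal := by
      rw [integral_congr_ae hae, integral_add (integrable_const 1)
        (integrable_finset_sum _ (fun t _ => (hg1int t).const_mul (Δ1 t)))]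
      congr 1
      · simp
      rw [integral_finset_sum _ (fun t _ => (hg1int t).const_mul (Δ1 t))]
      apply Finset.sum_congr rfl
      intro t _
      rw [integral_const_mul]
      congr 1
      exact integral_indicator_one (hsetm _ (hGm 1) (t + 1))
    have hIle : ∫ ω, Real.exp (1 * (G 1 ω : ℝ)) ∂μ
        ≤ Real.exp 1 * (1 - p + p * Real.exp 1) ^ n := by
      rw [hIval, ← sum_delta_binomTail' n (n + 2) (by omega) p 1]
      apply add_le_add_right
      apply Finset.sum_le_sum
      intro t _
      exact mul_le_mul_of_nonneg_left (hG1 t) (hΔ10 t)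
    have hfinal : Real.exp 1 * (1 - p + p * Real.exp 1) ^ n
        ≤ Real.exp (2 * p * (n : ℝ) + 1) := by
      have he3 : Real.exp 1 ≤ 3 := by
        have := Real.exp_one_lt_d9
        linarith
      have he1 : (1 : ℝ) ≤ Real.exp 1 := Real.one_le_exp zero_le_one
      have hb0 : (0 : ℝ) ≤ 1 - p + p * Real.exp 1 := by nlinarith
      have hble : 1 - p + p * Real.exp 1 ≤ Real.exp (2 * p) := by
        have := Real.add_one_le_exp (2 * p)
        nlinarith
      calc Real.exp 1 * (1 - p + p * Real.exp 1) ^ n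
          ≤ Real.exp 1 * (Real.exp (2 * p)) ^ n := by
            apply mul_le_mul_of_nonneg_left (pow_le_pow_left₀ hb0 hble n) (Real.exp_pos 1).le
        _ = Real.exp (2 * p * (n : ℝ) + 1) := by
            rw [← Real.exp_nat_mul, ← Real.exp_add]
            ring_nf
    calc ∫ ω, Real.exp (1 * (G 1 ω : ℝ)) ∂μ
        ≤ Real.exp 1 * (1 - p + p * Real.exp 1) ^ n := hIle
      _ ≤ Real.exp (2 * p * (n : ℝ) + 1) := hfinal
  | succ j hj ih =>
    simp only [Nat.add_sub_cancel]
    set θ' : ℝ := ((c : ℝ) ^ j)⁻¹ with hθ'def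
    have hcj : (2 : ℝ) ≤ c ^ j := le_trans hc2 (le_self_pow₀ (by linarith) (by omega))
    have hcj0 : (0 : ℝ) < c ^ j := by positivity
    have hθ'0 : 0 ≤ θ' := by positivity
    have hθ'h : θ' ≤ 1 / 2 := by
      rw [hθ'def, inv_eq_one_div, div_le_div_iff₀ hcj0 (by norm_num : (0:ℝ) < 2)]
      linarith
    obtain ⟨C, hC⟩ := hbdd j
    obtain ⟨C', hC'⟩ := hbdd (j - 1)
    have hCj : ∀ᵐ ω ∂μ, G j ω ≤ C' := by
      have hji : j - 1 + 1 = j := by omega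
      rwa [hji] at hC'
    set A : Ω → ℝ := fun ω => Real.exp (θ' * (G j ω : ℝ)) with hA
    set B : Ω → ℝ := fun ω => Real.exp (θ' * ((G (j + 1) ω - G j ω : ℕ) : ℝ)) with hB
    have hABeq : ∀ ω, Real.exp (θ' * ((G (j + 1) ω : ℕ) : ℝ)) = A ω * B ω := by
      intro ω
      rw [hA, hB, ← Real.exp_add]
      congr 1
      rw [Nat.cast_sub (hmono j ω)]
      ring
    have hABint : Integrable (A * B) μ := by
      have h := hIntX (G (j + 1)) (hGm (j + 1)) θ' C hθ'0 hC
      exact h.congr (Filter.Eventually.of_forall (fun ω => (hABeq ω)))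
    have hBint : Integrable B μ :=
      hIntX (fun ω => G (j + 1) ω - G j ω) ((hGm (j + 1)).sub (hGm j)) θ' n hθ'0 (hDle j)
    have hAsm : StronglyMeasurable[ℱ j] A :=
      (Real.measurable_exp.comp
        (measurable_const.mul (measurable_from_top.comp (hadapt j)))).stronglyMeasurable
    have hmul := condExp_mul_of_stronglyMeasurable_left hAsm hABint hBint
    set M : Ω → ℝ := fun ω => Real.exp ((θ' * (1 + 2 * p * (n : ℝ))) * (G j ω : ℝ)) with hM
    have hMint : Integrable M μ :=
      hIntX (G j) (hGm j) (θ' * (1 + 2 * p * (n : ℝ))) C' (by positivity) hCj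
    have hABcondint : Integrable (A * μ[B | ℱ j]) μ :=
      (integrable_condExp (f := A * B) (m := ℱ j)).congr hmul
    have hstep1 : ∫ ω, (A * μ[B | ℱ j]) ω ∂μ ≤ ∫ ω, M ω ∂μ := by
      apply integral_mono_ae hABcondint hMint
      filter_upwards [hcond2 j θ' hθ'0 hθ'h] with ω hω
      have hA0 : 0 ≤ A ω := (Real.exp_pos _).le
      calc (A * μ[B | ℱ j]) ω = A ω * (μ[B | ℱ j]) ω := rfl
        _ ≤ A ω * Real.exp (2 * θ' * p * (n : ℝ) * (G j ω : ℝ)) :=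
            mul_le_mul_of_nonneg_left hω hA0
        _ = M ω := by rw [hA, hM, ← Real.exp_add]; ring_nf
    have hstep2 : ∫ ω, M ω ∂μ
        ≤ ∫ ω, Real.exp (((c : ℝ) ^ (j - 1))⁻¹ * (G j ω : ℝ)) ∂μ := by
      apply integral_mono_ae hMint
        (hIntX (G j) (hGm j) ((c ^ (j - 1))⁻¹) C' (by positivity) hCj)
      apply Filter.Eventually.of_forall
      intro ω
      apply Real.exp_le_exp.2
      have hGnn : (0 : ℝ) ≤ (G j ω : ℝ) := Nat.cast_nonneg _
      have hkey : θ' * (1 + 2 * p * (n : ℝ)) ≤ (c ^ (j - 1))⁻¹ := by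
        have hpowsplit : c ^ j = c ^ (j - 1) * c := by
          rw [← pow_succ, Nat.sub_add_cancel hj]
        have hcp0 : (0 : ℝ) < c ^ (j - 1) := by positivity
        have : (c ^ (j - 1))⁻¹ = θ' * c := by
          rw [hθ'def, hpowsplit]
          field_simp
        rw [this]
        apply mul_le_mul_of_nonneg_left _ hθ'0
        rw [hc]; linarith
      exact mul_le_mul_of_nonneg_right hkey hGnn
    calc ∫ ω, Real.exp (θ' * ((G (j + 1) ω : ℕ) : ℝ)) ∂μ
        = ∫ ω, (A * B) ω ∂μ := integral_congr_ae (Filter.Eventually.of_forall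
            (fun ω => hABeq ω))
      _ = ∫ ω, (μ[A * B | ℱ j]) ω ∂μ := (integral_condExp (ℱ.le j)).symm
      _ = ∫ ω, (A * μ[B | ℱ j]) ω ∂μ := integral_congr_ae hmul
      _ ≤ ∫ ω, M ω ∂μ := hstep1
      _ ≤ ∫ ω, Real.exp (((c : ℝ) ^ (j - 1))⁻¹ * (G j ω : ℝ)) ∂μ := hstep2
      _ ≤ Real.exp (2 * p * (n : ℝ) + 1) := ih

end
end
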